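/- arXiv:2402.07968 — 13 statements merged into one kernel-verified Lean document; each statement's English description precedes it below -/
import Mathlib

section
/- For every nontrivial connected graph G, the total Roman {2}-domination number satisfies γ_t(G) ≤ γ_{tR2}(G) ≤ 2·γ_t(G), where γ_t(G) is the total domination number. -/
/-- `f` is a total Roman {2}-dominating function on `G`. -/
def IsTR2DF {V : Type*} (G : SimpleGraph V) (f : V → ℕ) : Prop :=
  (∀ v, f v ≤ 2) ∧
  (∀ v, f v = 0 →
    (∃ u, G.Adj u v ∧ f u = 2) ∨
    (∃ x y, x ≠ y ∧ G.Adj x v ∧ G.Adj y v ∧ f x = 1 ∧ f y = 1)) ∧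
  (∀ v, 0 < f v → ∃ u, G.Adj u v ∧ 0 < f u)

/-- The total Roman {2}-domination number of `G`. -/
noncomputable def tR2 {V : Type*} [Fintype V] (G : SimpleGraph V) : ℕ :=
  sInf {w | ∃ f : V → ℕ, IsTR2DF G f ∧ ∑ v, f v = w}

/-- The total domination number of `G`. -/
noncomputable def totalDomNum {V : Type*} [Fintype V] (G : SimpleGraph V) : ℕ :=
  sInf {k | ∃ S : Finset V, (∀ v : V, ∃ u ∈ S, G.Adj u v) ∧ S.card = k}

lemma exists_nbr {V : Type*} (G : SimpleGraph V) (hconn : G.Connected)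
    (hnt : Nontrivial V) (v : V) : ∃ u, G.Adj u v := by
  obtain ⟨w, hw⟩ := exists_ne v
  obtain ⟨p⟩ := hconn.preconnected w v
  have hr := p.reverse
  cases hr with
  | nil => exact absurd rfl hw.symm
  | cons h q => exact ⟨_, h.symm⟩

theorem stmt0 {V : Type*} [Fintype V] (G : SimpleGraph V)
    (hconn : G.Connected) (hnt : Nontrivial V) :
    totalDomNum G ≤ tR2 G ∧ tR2 G ≤ 2 * totalDomNum G := by
  classical
  have hnbr := exists_nbr G hconn hnt
  -- the TR2 set is nonempty (f ≡ 2)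
  have htr2_ne : {w | ∃ f : V → ℕ, IsTR2DF G f ∧ ∑ v, f v = w}.Nonempty := by
    refine ⟨∑ v : V, (2 : ℕ), fun _ => 2, ⟨fun _ => le_refl 2, ?_, ?_⟩, rfl⟩
    · intro v h; simp at h
    · intro v _; obtain ⟨u, hu⟩ := hnbr v; exact ⟨u, hu, by norm_num⟩
  -- the TDS set is nonempty (S = univ)
  have htd_ne : {k | ∃ S : Finset V, (∀ v : V, ∃ u ∈ S, G.Adj u v) ∧ S.card = k}.Nonempty := by
    refine ⟨(Finset.univ : Finset V).card, Finset.univ, fun v => ?_, rfl⟩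
    obtain ⟨u, hu⟩ := hnbr v
    exact ⟨u, Finset.mem_univ u, hu⟩
  constructor
  · -- γ_t ≤ tR2 : take a minimum TR2DF f, support is a TDS
    obtain ⟨f, ⟨hle2, h0, hpos⟩, hsum⟩ := Nat.sInf_mem htr2_ne
    have hTDS : ∀ v : V, ∃ u ∈ Finset.univ.filter (fun v => 0 < f v), G.Adj u v := by
      intro v
      rcases Nat.eq_zero_or_pos (f v) with hv | hv
      · rcases h0 v hv with ⟨u, hadj, hu2⟩ | ⟨x, y, _, hx, _, hx1, _⟩
        · exact ⟨u, by simp [hu2], hadj⟩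
        · exact ⟨x, by simp [hx1], hx⟩
      · obtain ⟨u, hadj, hu⟩ := hpos v hv
        exact ⟨u, by simp [hu], hadj⟩
    have hcard : (Finset.univ.filter (fun v => 0 < f v)).card ≤ ∑ v, f v := by
      calc (Finset.univ.filter (fun v => 0 < f v)).card
          = ∑ v ∈ Finset.univ.filter (fun v => 0 < f v), 1 := by simp
        _ ≤ ∑ v ∈ Finset.univ.filter (fun v => 0 < f v), f v := by
            apply Finset.sum_le_sum
            intro x hx
            exact (Finset.mem_filter.mp hx).2
        _ ≤ ∑ v, f v := Finset.sum_le_sum_of_subset (Finset.subset_univ _)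
    set S := Finset.univ.filter (fun v => 0 < f v)
    calc totalDomNum G ≤ S.card := Nat.sInf_le ⟨S, hTDS, rfl⟩
      _ ≤ ∑ v, f v := hcard
      _ = tR2 G := hsum
  · -- tR2 ≤ 2 γ_t : take a minimum TDS S, f = 2·indicator S
    obtain ⟨S, hTDS, hcard⟩ := Nat.sInf_mem htd_ne
    set f : V → ℕ := fun v => if v ∈ S then 2 else 0 with hf
    have hIs : IsTR2DF G f := by
      refine ⟨fun v => by simp [hf]; split <;> omega, ?_, ?_⟩
      · intro v hv
        obtain ⟨u, huS, hadj⟩ := hTDS v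
        exact Or.inl ⟨u, hadj, by simp [hf, huS]⟩
      · intro v hv
        obtain ⟨u, huS, hadj⟩ := hTDS v
        exact ⟨u, hadj, by simp [hf, huS]⟩
    have hsum : ∑ v, f v = 2 * S.card := by
      simp [hf, Finset.sum_ite_mem, Finset.univ_inter, Finset.sum_const, mul_comm]
    calc tR2 G ≤ ∑ v, f v := Nat.sInf_le ⟨f, hIs, rfl⟩
      _ = 2 * S.card := hsum
      _ = 2 * totalDomNum G := by rw [totalDomNum, hcard]
end

section
/- For every nontrivial connected graph G, γ_{tR2}(G) ≤ 3·γ(G), where γ(G) is the domination number. -/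
/-- The domination number of `G`. -/
noncomputable def domNum {V : Type*} [Fintype V] (G : SimpleGraph V) : ℕ :=
  sInf {k | ∃ S : Finset V, (∀ v : V, v ∉ S → ∃ u ∈ S, G.Adj u v) ∧ S.card = k}

theorem stmt1 {V : Type*} [Fintype V] (G : SimpleGraph V)
    (hconn : G.Connected) (hnt : Nontrivial V) :
    tR2 G ≤ 3 * domNum G := by
  classical
  -- every vertex has a neighbor
  have hadj : ∀ v : V, ∃ u, G.Adj v u := by
    intro v
    obtain ⟨w, hw⟩ := exists_ne v
    obtain ⟨p⟩ := hconn.preconnected v w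
    cases p with
    | nil => exact absurd rfl hw.symm
    | cons h _ => exact ⟨_, h⟩
  let nb : V → V := fun v => (hadj v).choose
  have hnb : ∀ v, G.Adj v (nb v) := fun v => (hadj v).choose_spec
  -- a minimum dominating set
  have hne : ({k | ∃ S : Finset V, (∀ v : V, v ∉ S → ∃ u ∈ S, G.Adj u v) ∧ S.card = k}).Nonempty := by
    exact ⟨(Finset.univ : Finset V).card, Finset.univ, by simp, rfl⟩
  obtain ⟨S, hSdom, hScard⟩ := Nat.sInf_mem hne
  -- define the TR2DF
  let f : V → ℕ := fun v => if v ∈ S then 2 else if v ∈ S.image nb then 1 else 0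
  have hf : IsTR2DF G f := by
    refine ⟨?_, ?_, ?_⟩
    · intro v
      simp only [f]; split_ifs <;> omega
    · intro v hv
      left
      have hvS : v ∉ S := by
        intro h; simp [f, h] at hv
      obtain ⟨u, huS, hu⟩ := hSdom v hvS
      exact ⟨u, hu, by simp [f, huS]⟩
    · intro v hv
      by_cases hvS : v ∈ S
      · refine ⟨nb v, (hnb v).symm, ?_⟩
        have : nb v ∈ S.image nb := Finset.mem_image_of_mem nb hvS
        by_cases h : nb v ∈ S
        · simp [f, h]
        · simp only [f]; rw [if_neg h, if_pos this]; norm_num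
      · have hvI : v ∈ S.image nb := by
          by_contra h
          simp only [f] at hv; rw [if_neg hvS, if_neg h] at hv
          exact lt_irrefl 0 hv
        obtain ⟨u, huS, hu⟩ := Finset.mem_image.mp hvI
        refine ⟨u, ?_, by simp [f, huS]⟩
        rw [← hu]; exact hnb u
  have hsum : ∑ v, f v ≤ 3 * S.card := by
    have hle : ∀ v, f v ≤ (if v ∈ S then 2 else 0) + (if v ∈ S.image nb then 1 else 0) := by
      intro v
      simp only [f]; split_ifs <;> omega
    calc ∑ v, f v ≤ ∑ v, ((if v ∈ S then 2 else 0) + (if v ∈ S.image nb then 1 else 0)) :=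
          Finset.sum_le_sum (fun v _ => hle v)
      _ = 2 * S.card + (S.image nb).card := by
          rw [Finset.sum_add_distrib]
          congr 1
          · rw [Finset.sum_ite_mem, Finset.univ_inter, Finset.sum_const, smul_eq_mul, mul_comm]
          · rw [Finset.sum_ite_mem, Finset.univ_inter, Finset.sum_const, smul_eq_mul, mul_one]
      _ ≤ 2 * S.card + S.card := by
          have := Finset.card_image_le (s := S) (f := nb)
          omega
      _ = 3 * S.card := by ring
  have h1 : tR2 G ≤ ∑ v, f v := Nat.sInf_le ⟨f, hf, rfl⟩
  calc tR2 G ≤ ∑ v, f v := h1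
    _ ≤ 3 * S.card := hsum
    _ = 3 * domNum G := by rw [hScard]; rfl
end

section
/- Let G be a nontrivial connected graph and let f = (V_0, V_1, V_2) be a minimum-weight total Roman {2}-dominating function chosen with |V_2| as small as possible. Then each vertex in V_2 has at least two private neighbors in V_0 with respect to V_2, i.e., for each v ∈ V_2 there exist at least two vertices w ∈ V_0 with N(w) ∩ V_2 = {v}. -/
theorem stmt3 {V : Type*} [Fintype V] [DecidableEq V] (G : SimpleGraph V)
    (hconn : G.Connected) (hnt : Nontrivial V) (f : V → ℕ)
    (hf : IsTR2DF G f) (hmin : ∑ v, f v = tR2 G)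
    (hV2 : ∀ g : V → ℕ, IsTR2DF G g → ∑ v, g v = tR2 G →
      (Finset.univ.filter fun v => f v = 2).card ≤
        (Finset.univ.filter fun v => g v = 2).card) :
    ∀ v, f v = 2 → ∃ w₁ w₂ : V, w₁ ≠ w₂ ∧
      f w₁ = 0 ∧ f w₂ = 0 ∧ G.Adj w₁ v ∧ G.Adj w₂ v ∧
      (∀ u, f u = 2 → G.Adj w₁ u → u = v) ∧
      (∀ u, f u = 2 → G.Adj w₂ u → u = v) := by
  classical
  intro v hv
  set P : Finset V := Finset.univ.filter
    (fun w => f w = 0 ∧ G.Adj w v ∧ ∀ u, f u = 2 → G.Adj w u → u = v) with hPdef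
  by_cases hcard : 2 ≤ P.card
  · obtain ⟨w₁, hw₁, w₂, hw₂, hne⟩ := Finset.one_lt_card.mp hcard
    rw [hPdef, Finset.mem_filter] at hw₁ hw₂
    exact ⟨w₁, w₂, hne, hw₁.2.1, hw₂.2.1, hw₁.2.2.1, hw₂.2.2.1, hw₁.2.2.2, hw₂.2.2.2⟩
  exfalso
  push_neg at hcard
  obtain ⟨hf2, hf0, hft⟩ := hf
  interval_cases h : P.card
  · -- no private neighbor: lower f v to 1
    have hPe : P = ∅ := Finset.card_eq_zero.mp h
    have hnotP : ∀ x, f x = 0 → G.Adj x v → ∃ u, f u = 2 ∧ G.Adj x u ∧ u ≠ v := by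
      intro x hx0 hxv
      have : x ∉ P := by simp [hPe]
      rw [hPdef, Finset.mem_filter] at this
      push_neg at this
      exact this (Finset.mem_univ x) hx0 hxv
    set g : V → ℕ := Function.update f v 1 with hgdef
    have hgv : g v = 1 := Function.update_self v 1 f
    have hgo : ∀ u, u ≠ v → g u = f u := fun u hu => Function.update_of_ne hu 1 f
    have hg : IsTR2DF G g := by
      refine ⟨fun u => ?_, fun x hx => ?_, fun x hx => ?_⟩
      · by_cases hu : u = v
        · subst hu; omega
        · rw [hgo u hu]; exact hf2 u
      · have hxv : x ≠ v := by intro hxe; rw [hxe, hgv] at hx; omega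
        have hx0 : f x = 0 := by rwa [hgo x hxv] at hx
        rcases hf0 x hx0 with ⟨u, huv, hu2⟩ | ⟨a, b, hab, ha, hb, ha1, hb1⟩
        · by_cases huv' : u = v
          · obtain ⟨u', hu'2, hu'a, hu'v⟩ := hnotP x hx0 (huv' ▸ huv.symm)
            exact Or.inl ⟨u', hu'a.symm, by rwa [hgo u' hu'v]⟩
          · exact Or.inl ⟨u, huv, by rwa [hgo u huv']⟩
        · have hav : a ≠ v := fun he => by rw [he, hv] at ha1; omega
          have hbv : b ≠ v := fun he => by rw [he, hv] at hb1; omega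
          exact Or.inr ⟨a, b, hab, ha, hb, by rwa [hgo a hav], by rwa [hgo b hbv]⟩
      · by_cases hxv : x = v
        · obtain ⟨u, hua, hup⟩ := hft v (by omega)
          have huv : u ≠ v := G.ne_of_adj hua
          exact ⟨u, hxv.symm ▸ hua, by rw [hgo u huv]; exact hup⟩
        · obtain ⟨u, hua, hup⟩ := hft x (by rwa [hgo x hxv] at hx)
          by_cases huv : u = v
          · exact ⟨u, hua, by rw [huv, hgv]; omega⟩
          · exact ⟨u, hua, by rwa [hgo u huv]⟩
    have hsum : ∑ x, g x + 1 = ∑ x, f x := by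
      rw [hgdef, Finset.sum_update_of_mem (Finset.mem_univ v),
        Finset.sum_eq_sum_sdiff_singleton_add (Finset.mem_univ v) f, hv]
      omega
    have hle : tR2 G ≤ ∑ x, g x := Nat.sInf_le ⟨g, hg, rfl⟩
    omega
  · -- exactly one private neighbor w
    obtain ⟨w, hPw⟩ := Finset.card_eq_one.mp h
    have hwP : w ∈ P := by rw [hPw]; exact Finset.mem_singleton_self w
    rw [hPdef, Finset.mem_filter] at hwP
    obtain ⟨-, hw0, hwv, hwpriv⟩ := hwP
    have huniq : ∀ x, f x = 0 → G.Adj x v → (∀ u, f u = 2 → G.Adj x u → u = v) → x = w := by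
      intro x h1 h2 h3
      have : x ∈ P := by rw [hPdef, Finset.mem_filter]; exact ⟨Finset.mem_univ x, h1, h2, h3⟩
      rwa [hPw, Finset.mem_singleton] at this
    have hwv' : w ≠ v := fun he => by rw [he, hv] at hw0; omega
    set g : V → ℕ := Function.update (Function.update f v 1) w 1 with hgdef
    have hgv : g v = 1 := by
      rw [hgdef, Function.update_of_ne hwv'.symm, Function.update_self]
    have hgw : g w = 1 := Function.update_self w 1 _
    have hgo : ∀ u, u ≠ v → u ≠ w → g u = f u := by
      intro u hu1 hu2
      rw [hgdef, Function.update_of_ne hu2, Function.update_of_ne hu1]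
    have hg : IsTR2DF G g := by
      refine ⟨fun u => ?_, fun x hx => ?_, fun x hx => ?_⟩
      · by_cases h1 : u = v
        · subst h1; omega
        by_cases h2 : u = w
        · subst h2; omega
        · rw [hgo u h1 h2]; exact hf2 u
      · have hxv : x ≠ v := fun he => by rw [he, hgv] at hx; omega
        have hxw : x ≠ w := fun he => by rw [he, hgw] at hx; omega
        have hx0 : f x = 0 := by rwa [hgo x hxv hxw] at hx
        have hne2 : ∀ u, f u = 2 → u ≠ v → g u = 2 := by
          intro u hu2 huv
          have huw : u ≠ w := fun he => by rw [he, hw0] at hu2; omega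
          rw [hgo u huv huw]; exact hu2
        rcases hf0 x hx0 with ⟨u, hua, hu2⟩ | ⟨a, b, hab, ha, hb, ha1, hb1⟩
        · by_cases huv' : u = v
          · -- x adj v; x ≠ w so x not private: has another 2-neighbor
            have hxadjv : G.Adj x v := huv' ▸ hua.symm
            have : ¬ (∀ u, f u = 2 → G.Adj x u → u = v) := by
              intro hcon; exact hxw (huniq x hx0 hxadjv hcon)
            push_neg at this
            obtain ⟨u', hu'2, hu'a, hu'v⟩ := this
            exact Or.inl ⟨u', hu'a.symm, hne2 u' hu'2 hu'v⟩
          · exact Or.inl ⟨u, hua, hne2 u hu2 huv'⟩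
        · have hav : a ≠ v := fun he => by rw [he, hv] at ha1; omega
          have hbv : b ≠ v := fun he => by rw [he, hv] at hb1; omega
          have haw : a ≠ w := fun he => by rw [he, hw0] at ha1; omega
          have hbw : b ≠ w := fun he => by rw [he, hw0] at hb1; omega
          exact Or.inr ⟨a, b, hab, ha, hb, by rwa [hgo a hav haw], by rwa [hgo b hbv hbw]⟩
      · by_cases h1 : x = v
        · subst h1; exact ⟨w, hwv, by rw [hgw]; omega⟩
        by_cases h2 : x = w
        · subst h2; exact ⟨v, hwv.symm, by rw [hgv]; omega⟩
        · obtain ⟨u, hua, hup⟩ := hft x (by rwa [hgo x h1 h2] at hx)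
          by_cases huv : u = v
          · exact ⟨u, hua, by rw [huv, hgv]; omega⟩
          by_cases huw : u = w
          · exact ⟨u, hua, by rw [huw, hgw]; omega⟩
          · exact ⟨u, hua, by rwa [hgo u huv huw]⟩
    have hvmem : v ∈ Finset.univ \ {w} := by
      simp [hwv'.symm, Ne.symm hwv']
    have hsum : ∑ x, g x = ∑ x, f x := by
      rw [hgdef, Finset.sum_update_of_mem (Finset.mem_univ w),
        Finset.sum_update_of_mem hvmem,
        Finset.sum_eq_sum_sdiff_singleton_add (Finset.mem_univ w) f,
        Finset.sum_eq_sum_sdiff_singleton_add hvmem f, hv, hw0]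
      omega
    have hcardlt : (Finset.univ.filter fun x => g x = 2).card <
        (Finset.univ.filter fun x => f x = 2).card := by
      have hsub : (Finset.univ.filter fun x => g x = 2) ⊆
          (Finset.univ.filter fun x => f x = 2).erase v := by
        intro x hx
        rw [Finset.mem_filter] at hx
        have hxv : x ≠ v := fun he => by rw [he, hgv] at hx; omega
        have hxw : x ≠ w := fun he => by rw [he, hgw] at hx; omega
        rw [Finset.mem_erase, Finset.mem_filter]
        exact ⟨hxv, Finset.mem_univ x, by rw [← hgo x hxv hxw]; exact hx.2⟩
      have hvmem : v ∈ (Finset.univ.filter fun x => f x = 2) :=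
        Finset.mem_filter.mpr ⟨Finset.mem_univ v, hv⟩
      calc (Finset.univ.filter fun x => g x = 2).card
          ≤ ((Finset.univ.filter fun x => f x = 2).erase v).card := Finset.card_le_card hsub
        _ < (Finset.univ.filter fun x => f x = 2).card :=
            Finset.card_erase_lt_of_mem hvmem
    have := hV2 g hg (hsum.trans hmin)
    omega
end

section
/- Let G be a nontrivial connected graph with maximum degree Δ(G) ≤ 2. Then there exists a minimum-weight total Roman {2}-dominating function f = (V_0, V_1, V_2) on G with V_2 = ∅. -/
theorem stmt4 {V : Type*} [Fintype V] {G : SimpleGraph V} [DecidableRel G.Adj]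
    (hconn : G.Connected) (hnt : Nontrivial V) (hΔ : G.maxDegree ≤ 2) :
    ∃ f : V → ℕ, IsTR2DF G f ∧ ∑ v, f v = tR2 G ∧ ∀ v, f v ≠ 2 := by
  classical
  -- every vertex has a neighbor
  have hadj : ∀ v : V, ∃ u, G.Adj u v := by
    intro v
    obtain ⟨w, hw⟩ := exists_ne v
    obtain ⟨p⟩ := hconn.preconnected v w
    cases p with
    | nil => exact absurd rfl (Ne.symm hw)
    | cons h q => exact ⟨_, h.symm⟩
  -- the constant 1 function is a TR2DF
  have hone : IsTR2DF G (fun _ => 1) := by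
    refine ⟨fun v => one_le_two, fun v hv => by simp at hv, fun v _ => ?_⟩
    obtain ⟨u, hu⟩ := hadj v
    exact ⟨u, hu, one_pos⟩
  have hSne : {w | ∃ f : V → ℕ, IsTR2DF G f ∧ ∑ v, f v = w}.Nonempty :=
    ⟨∑ _v : V, 1, fun _ => 1, hone, rfl⟩
  -- tR2 G is attained
  obtain ⟨f₀, hf₀, hw₀⟩ : ∃ f : V → ℕ, IsTR2DF G f ∧ ∑ v, f v = tR2 G :=
    Nat.sInf_mem hSne
  -- among minimum-weight TR2DFs pick one minimizing the number of 2's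
  set T : Set ℕ := {n | ∃ f : V → ℕ, IsTR2DF G f ∧ ∑ v, f v = tR2 G ∧
      (Finset.univ.filter (fun v => f v = 2)).card = n} with hT
  have hTne : T.Nonempty := ⟨_, f₀, hf₀, hw₀, rfl⟩
  obtain ⟨f, hf, hw, hcard⟩ := Nat.sInf_mem hTne
  by_cases hm : sInf T = 0
  · refine ⟨f, hf, hw, ?_⟩
    intro v hv
    have : v ∈ Finset.univ.filter (fun v => f v = 2) := by simp [hv]
    have := Finset.card_pos.mpr ⟨v, this⟩
    omega
  · exfalso
    -- there is a vertex with value 2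
    have hpos : 0 < (Finset.univ.filter (fun v => f v = 2)).card := by omega
    obtain ⟨v0, hv0m⟩ := Finset.card_pos.mp hpos
    have hv0 : f v0 = 2 := (Finset.mem_filter.mp hv0m).2
    obtain ⟨hle2, hzero, htotal⟩ := hf
    obtain ⟨u, huv, hupos⟩ := htotal v0 (by omega)
    have huv0 : u ≠ v0 := fun h => G.loopless.irrefl v0 (h ▸ huv)
    have hdeg : G.degree v0 ≤ 2 := le_trans (G.degree_le_maxDegree v0) hΔ
    -- at most one neighbor of v0 with value 0 besides u
    have huniq : ∀ z z' : V, G.Adj v0 z → G.Adj v0 z' → f z = 0 → f z' = 0 →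
        z = z' := by
      intro z z' hz hz' hfz hfz'
      by_contra hne
      have hzu : z ≠ u := fun h => by rw [h] at hfz; omega
      have hz'u : z' ≠ u := fun h => by rw [h] at hfz'; omega
      have hsub : ({z, z', u} : Finset V) ⊆ G.neighborFinset v0 := by
        intro x hx
        simp only [Finset.mem_insert, Finset.mem_singleton] at hx
        rcases hx with rfl | rfl | rfl
        · exact (G.mem_neighborFinset v0 x).mpr hz
        · exact (G.mem_neighborFinset v0 x).mpr hz'
        · exact (G.mem_neighborFinset v0 x).mpr huv.symm
      have h3 : ({z, z', u} : Finset V).card = 3 := by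
        rw [Finset.card_insert_of_notMem (by simp [hne, hzu]),
          Finset.card_insert_of_notMem (by simp [hz'u]), Finset.card_singleton]
      have := Finset.card_le_card hsub
      rw [h3] at this
      rw [SimpleGraph.degree] at hdeg
      omega
    by_cases hN : ∃ w, G.Adj v0 w ∧ f w = 0
    · -- swap: set f v0 := 1, f w := 1; same weight, fewer 2's
      obtain ⟨w, hwadj, hfw⟩ := hN
      have hwv0 : w ≠ v0 := fun h => by rw [h, hv0] at hfw; omega
      set g : V → ℕ := Function.update (Function.update f v0 1) w 1 with hg
      have hgval : ∀ x, x ≠ v0 → x ≠ w → g x = f x := by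
        intro x hx1 hx2
        simp [hg, Function.update_of_ne hx2, Function.update_of_ne hx1]
      have hgv0 : g v0 = 1 := by
        simp [hg, Function.update_of_ne (Ne.symm hwv0)]
      have hgw : g w = 1 := by simp [hg]
      have hgpos : ∀ x, 0 < f x → 0 < g x := by
        intro x hx
        by_cases h1 : x = v0
        · rw [h1, hgv0]; omega
        by_cases h2 : x = w
        · rw [h2, hgw]; omega
        · rw [hgval x h1 h2]; exact hx
      have hgTR : IsTR2DF G g := by
        refine ⟨?_, ?_, ?_⟩
        · intro v
          by_cases h1 : v = v0
          · rw [h1, hgv0]; omega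
          by_cases h2 : v = w
          · rw [h2, hgw]; omega
          · rw [hgval v h1 h2]; exact hle2 v
        · intro v hv
          have hvv0 : v ≠ v0 := fun h => by rw [h, hgv0] at hv; omega
          have hvw : v ≠ w := fun h => by rw [h, hgw] at hv; omega
          rw [hgval v hvv0 hvw] at hv
          rcases hzero v hv with ⟨u', hu'adj, hu'2⟩ | ⟨x, y, hxy, hxadj, hyadj, hx1, hy1⟩
          · have hu'v0 : u' ≠ v0 := by
              intro h
              exact hvw (huniq v w (h ▸ hu'adj) hwadj hv hfw)
            have hu'w : u' ≠ w := fun h => by rw [h, hfw] at hu'2; omega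
            exact Or.inl ⟨u', hu'adj, by rw [hgval u' hu'v0 hu'w]; exact hu'2⟩
          · have hxv0 : x ≠ v0 := fun h => by rw [h, hv0] at hx1; omega
            have hyv0 : y ≠ v0 := fun h => by rw [h, hv0] at hy1; omega
            have hxw : x ≠ w := fun h => by rw [h, hfw] at hx1; omega
            have hyw : y ≠ w := fun h => by rw [h, hfw] at hy1; omega
            exact Or.inr ⟨x, y, hxy, hxadj, hyadj,
              by rw [hgval x hxv0 hxw]; exact hx1,
              by rw [hgval y hyv0 hyw]; exact hy1⟩
        · intro v hv
          by_cases h2 : v = w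
          · exact ⟨v0, by rw [h2]; exact hwadj, by rw [hgv0]; omega⟩
          by_cases h1 : v = v0
          · exact ⟨u, h1 ▸ huv, hgpos u hupos⟩
          · rw [hgval v h1 h2] at hv
            obtain ⟨p, hpadj, hppos⟩ := htotal v hv
            exact ⟨p, hpadj, hgpos p hppos⟩
      -- same weight
      have hsum : ∑ v, g v = ∑ v, f v := by
        have h1 : ∑ v, g v = 1 + ∑ v ∈ Finset.univ \ {w}, Function.update f v0 1 v := by
          rw [hg, Finset.sum_update_of_mem (Finset.mem_univ w)]
        have hv0mem : v0 ∈ Finset.univ \ ({w} : Finset V) := by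
          simp [Ne.symm hwv0]
        have h2 : ∑ v ∈ Finset.univ \ {w}, Function.update f v0 1 v =
            1 + ∑ v ∈ (Finset.univ \ {w}) \ {v0}, f v := by
          rw [Finset.sum_update_of_mem hv0mem]
        have h3 : ∑ v, f v = f w + ∑ v ∈ Finset.univ \ {w}, f v := by
          rw [Finset.sdiff_singleton_eq_erase, Finset.add_sum_erase _ _ (Finset.mem_univ w)]
        have h4 : ∑ v ∈ Finset.univ \ {w}, f v =
            f v0 + ∑ v ∈ (Finset.univ \ {w}) \ {v0}, f v := by
          rw [Finset.sdiff_singleton_eq_erase (v0) (Finset.univ \ {w}),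
            Finset.add_sum_erase _ _ hv0mem]
        rw [h1, h2, h3, h4, hfw, hv0]
        omega
      -- fewer 2's
      have hfilter : Finset.univ.filter (fun v => g v = 2) =
          (Finset.univ.filter (fun v => f v = 2)).erase v0 := by
        ext x
        simp only [Finset.mem_filter, Finset.mem_erase, Finset.mem_univ, true_and]
        constructor
        · intro hx
          have hx1 : x ≠ v0 := fun h => by rw [h, hgv0] at hx; omega
          have hx2 : x ≠ w := fun h => by rw [h, hgw] at hx; omega
          exact ⟨hx1, by rw [← hgval x hx1 hx2]; exact hx⟩
        · rintro ⟨hx1, hx2⟩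
          have hxw : x ≠ w := fun h => by rw [h, hfw] at hx2; omega
          rw [hgval x hx1 hxw]; exact hx2
      have hcard' : (Finset.univ.filter (fun v => g v = 2)).card = sInf T - 1 := by
        rw [hfilter, Finset.card_erase_of_mem hv0m, hcard]
      have : sInf T ≤ sInf T - 1 :=
        Nat.sInf_le ⟨g, hgTR, by rw [hsum, hw], hcard'⟩
      omega
    · -- no zero neighbor: lowering f v0 to 1 beats the minimum weight
      push_neg at hN
      set g : V → ℕ := Function.update f v0 1 with hg
      have hgval : ∀ x, x ≠ v0 → g x = f x := fun x hx =>
        Function.update_of_ne hx _ _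
      have hgv0 : g v0 = 1 := by simp [hg]
      have hgpos : ∀ x, 0 < f x → 0 < g x := by
        intro x hx
        by_cases h1 : x = v0
        · rw [h1, hgv0]; omega
        · rw [hgval x h1]; exact hx
      have hgTR : IsTR2DF G g := by
        refine ⟨?_, ?_, ?_⟩
        · intro v
          by_cases h1 : v = v0
          · rw [h1, hgv0]; omega
          · rw [hgval v h1]; exact hle2 v
        · intro v hv
          have hvv0 : v ≠ v0 := fun h => by rw [h, hgv0] at hv; omega
          rw [hgval v hvv0] at hv
          rcases hzero v hv with ⟨u', hu'adj, hu'2⟩ | ⟨x, y, hxy, hxadj, hyadj, hx1, hy1⟩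
          · have hu'v0 : u' ≠ v0 := by
              intro h
              exact (hN v (h ▸ hu'adj)) hv
            exact Or.inl ⟨u', hu'adj, by rw [hgval u' hu'v0]; exact hu'2⟩
          · have hxv0 : x ≠ v0 := fun h => by rw [h, hv0] at hx1; omega
            have hyv0 : y ≠ v0 := fun h => by rw [h, hv0] at hy1; omega
            exact Or.inr ⟨x, y, hxy, hxadj, hyadj,
              by rw [hgval x hxv0]; exact hx1, by rw [hgval y hyv0]; exact hy1⟩
        · intro v hv
          by_cases h1 : v = v0
          · exact ⟨u, h1 ▸ huv, hgpos u hupos⟩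
          · rw [hgval v h1] at hv
            obtain ⟨p, hpadj, hppos⟩ := htotal v hv
            exact ⟨p, hpadj, hgpos p hppos⟩
      have hsum : ∑ v, g v < ∑ v, f v := by
        have h1 : ∑ v, g v = 1 + ∑ v ∈ Finset.univ \ {v0}, f v := by
          rw [hg, Finset.sum_update_of_mem (Finset.mem_univ v0)]
        have h3 : ∑ v, f v = f v0 + ∑ v ∈ Finset.univ \ {v0}, f v := by
          rw [Finset.sdiff_singleton_eq_erase, Finset.add_sum_erase _ _ (Finset.mem_univ v0)]
        rw [h1, h3, hv0]
        omega
      have : tR2 G ≤ ∑ v, g v := Nat.sInf_le ⟨g, hgTR, rfl⟩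
      omega
end

section
/- For the path P_n with n ≥ 2, the total Roman {2}-domination number equals ⌈(2n+2)/3⌉. -/
namespace TR2aux

def g0 (i : ℕ) : ℕ := if i % 3 = 2 then 0 else 1

lemma sum_g0 (n : ℕ) : ∑ i ∈ Finset.range n, g0 i = n - n / 3 := by
  induction n with
  | zero => simp
  | succ n ih =>
    rw [Finset.sum_range_succ, ih]
    unfold g0
    split <;> omega

/-- Core arithmetic lower bound, phrased over padded ℕ-indexed functions:
vertices are `1..n`, `F 0 = 0` and `F j = 0` for `j > n`. -/
lemma core (n : ℕ) (hn : 2 ≤ n) (F : ℕ → ℕ)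
    (hF0 : F 0 = 0) (hFtop : ∀ j, n < j → F j = 0)
    (h0 : ∀ j, 1 ≤ j → j ≤ n → F j = 0 → 2 ≤ F (j-1) + F (j+1))
    (h1 : ∀ j, 1 ≤ j → j ≤ n → 0 < F j → 0 < F (j-1) + F (j+1))
    (he1 : F 1 = 0 → F 2 = 2)
    (he2 : F n = 0 → F (n-1) = 2) :
    2 * n + 2 ≤ 3 * ∑ j ∈ Finset.range n, F (j+1) := by
  set S := ∑ j ∈ Finset.range n, F (j+1) with hS
  set T : ℕ → ℕ := fun j => F j + F (j+1) + F (j+1+1) with hT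
  -- sum identity
  have hA : (∑ j ∈ Finset.range n, F j) + F n = S := by
    have e1 := Finset.sum_range_succ F n
    have e2 := Finset.sum_range_succ' F n
    omega
  have hB : F 1 + ∑ j ∈ Finset.range n, F (j+1+1) = S := by
    have e1 := Finset.sum_range_succ (fun j => F (j+1)) n
    have e2 := Finset.sum_range_succ' (fun j => F (j+1)) n
    have e3 : F (n+1) = 0 := hFtop _ (by omega)
    simp only [Nat.zero_add] at e1 e2
    omega
  have hTsum : (∑ j ∈ Finset.range n, T j) + F 1 + F n = 3 * S := by
    have e : ∑ j ∈ Finset.range n, T j =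
        ((∑ j ∈ Finset.range n, F j) + ∑ j ∈ Finset.range n, F (j+1)) +
          ∑ j ∈ Finset.range n, F (j+1+1) := by
      rw [← Finset.sum_add_distrib, ← Finset.sum_add_distrib]
    omega
  have hT2 : ∀ j ∈ Finset.range n, 2 ≤ T j := by
    intro j hj
    rw [Finset.mem_range] at hj
    rcases Nat.eq_zero_or_pos (F (j+1)) with h | h
    · have := h0 (j+1) (by omega) (by omega) h
      simp only [Nat.add_sub_cancel] at this
      simp only [hT]; omega
    · have := h1 (j+1) (by omega) (by omega) h
      simp only [Nat.add_sub_cancel] at this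
      simp only [hT]; omega
  -- helpers for erased sums
  have hbound : ∀ s : Finset ℕ, s ⊆ Finset.range n → 2 * s.card ≤ ∑ j ∈ s, T j := by
    intro s hs
    have := Finset.card_nsmul_le_sum s T 2 (fun j hj => hT2 j (hs hj))
    simpa [smul_eq_mul, Nat.mul_comm] using this
  rcases Nat.eq_zero_or_pos (F 1) with h1z | h1p
  · have hF2 : F 2 = 2 := he1 h1z
    have hn3 : 3 ≤ n := by
      rcases (show n = 2 ∨ 3 ≤ n by omega) with rfl | h
      · have h23 : 0 < F 1 + F 3 := h1 2 (by omega) (by omega) (by omega)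
        have h3 : F 3 = 0 := hFtop 3 (by omega)
        omega
      · exact h
    have hF3 : 0 < F 3 := by
      have h23 : 0 < F 1 + F 3 := h1 2 (by omega) (by omega) (by omega)
      omega
    have hT1 : 3 ≤ T 1 := by
      have e : T 1 = F 1 + F 2 + F 3 := rfl
      omega
    rcases Nat.eq_zero_or_pos (F n) with hnz | hnp
    · -- both ends zero
      have hFn1 : F (n-1) = 2 := he2 hnz
      have hn4 : 4 ≤ n := by
        rcases (show n = 3 ∨ 4 ≤ n by omega) with rfl | h
        · omega
        · exact h
      have hFn2 : 0 < F (n-2) := by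
        have h' := h1 (n-1) (by omega) (by omega) (by omega)
        have e1 : n - 1 - 1 = n - 2 := by omega
        have e2 : n - 1 + 1 = n := by omega
        rw [e1, e2] at h'
        omega
      have hTn2 : 3 ≤ T (n-2) := by
        simp only [hT]
        have e1 : n - 2 + 1 = n - 1 := by omega
        rw [e1]
        have e2 : n - 1 + 1 = n := by omega
        rw [e2]
        omega
      have hmem1 : 1 ∈ Finset.range n := by simp; omega
      have hmem2 : n - 2 ∈ (Finset.range n).erase 1 := by
        simp [Finset.mem_erase]; omega
      have e1 := Finset.add_sum_erase (Finset.range n) T hmem1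
      have e2 := Finset.add_sum_erase ((Finset.range n).erase 1) T hmem2
      have hrest := hbound (((Finset.range n).erase 1).erase (n-2))
        (fun x hx => Finset.mem_of_mem_erase (Finset.mem_of_mem_erase hx))
      have hcard : (((Finset.range n).erase 1).erase (n-2)).card = n - 2 := by
        rw [Finset.card_erase_of_mem hmem2, Finset.card_erase_of_mem hmem1,
          Finset.card_range]
        omega
      rw [hcard] at hrest
      omega
    · -- left end zero only
      have hmem1 : 1 ∈ Finset.range n := by simp; omega
      have e1 := Finset.add_sum_erase (Finset.range n) T hmem1
      have hrest := hbound ((Finset.range n).erase 1)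
        (fun x hx => Finset.mem_of_mem_erase hx)
      have hcard : ((Finset.range n).erase 1).card = n - 1 := by
        rw [Finset.card_erase_of_mem hmem1, Finset.card_range]
      rw [hcard] at hrest
      omega
  · rcases Nat.eq_zero_or_pos (F n) with hnz | hnp
    · -- right end zero only
      have hFn1 : F (n-1) = 2 := he2 hnz
      have hn3 : 3 ≤ n := by
        rcases (show n = 2 ∨ 3 ≤ n by omega) with rfl | h
        · have h01 : 0 < F 0 + F 2 := h1 1 (by omega) (by omega) (by omega)
          omega
        · exact h
      have hFn2 : 0 < F (n-2) := by
        have h' := h1 (n-1) (by omega) (by omega) (by omega)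
        have e1 : n - 1 - 1 = n - 2 := by omega
        have e2 : n - 1 + 1 = n := by omega
        rw [e1, e2] at h'
        omega
      have hTn2 : 3 ≤ T (n-2) := by
        simp only [hT]
        have e1 : n - 2 + 1 = n - 1 := by omega
        rw [e1]
        have e2 : n - 1 + 1 = n := by omega
        rw [e2]
        omega
      have hmem2 : n - 2 ∈ Finset.range n := by simp; omega
      have e1 := Finset.add_sum_erase (Finset.range n) T hmem2
      have hrest := hbound ((Finset.range n).erase (n-2))
        (fun x hx => Finset.mem_of_mem_erase hx)
      have hcard : ((Finset.range n).erase (n-2)).card = n - 1 := by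
        rw [Finset.card_erase_of_mem hmem2, Finset.card_range]
      rw [hcard] at hrest
      omega
    · -- both ends positive
      have := hbound (Finset.range n) (le_refl _)
      rw [Finset.card_range] at this
      omega

lemma lower (n : ℕ) (hn : 2 ≤ n) (f : Fin n → ℕ)
    (hf : IsTR2DF (SimpleGraph.pathGraph n) f) :
    2 * n + 2 ≤ 3 * ∑ v, f v := by
  obtain ⟨hb, h0, h1⟩ := hf
  set F : ℕ → ℕ := fun j => if h : 1 ≤ j ∧ j ≤ n then f ⟨j - 1, by omega⟩ else 0 with hF
  have hFval : ∀ (j : ℕ) (h : j < n), F (j+1) = f ⟨j, h⟩ := by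
    intro j h
    simp only [hF]
    rw [dif_pos ⟨by omega, by omega⟩]
    exact congrArg f (Fin.ext (show j + 1 - 1 = j by omega))
  have hFval2 : ∀ (j : ℕ) (hj1 : 1 ≤ j) (hjn : j ≤ n), F j = f ⟨j - 1, by omega⟩ := by
    intro j hj1 hjn
    simp only [hF]
    rw [dif_pos ⟨hj1, hjn⟩]
  have hadj' : ∀ (j : ℕ) (hj1 : 1 ≤ j) (hjn : j ≤ n) (u : Fin n),
      (SimpleGraph.pathGraph n).Adj u ⟨j - 1, by omega⟩ →
      (F (j-1) = f u ∧ u.val + 2 = j) ∨ (F (j+1) = f u ∧ u.val = j ∧ j < n) := by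
    intro j hj1 hjn u hadj
    rw [SimpleGraph.pathGraph_adj] at hadj
    have hadj2 : u.val + 1 = j - 1 ∨ (j - 1) + 1 = u.val := hadj
    have hu := u.isLt
    rcases hadj2 with h | h
    · left
      refine ⟨?_, by omega⟩
      have e : j - 1 = u.val + 1 := by omega
      rw [e, hFval u.val u.isLt, Fin.eta]
    · right
      refine ⟨?_, by omega, by omega⟩
      have e : j + 1 = u.val + 1 := by omega
      rw [e, hFval u.val u.isLt, Fin.eta]
  have hF0 : F 0 = 0 := by simp [hF]
  have hFtop : ∀ j, n < j → F j = 0 := by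
    intro j hj; simp only [hF]; rw [dif_neg]; omega
  have h0' : ∀ j, 1 ≤ j → j ≤ n → F j = 0 → 2 ≤ F (j-1) + F (j+1) := by
    intro j hj1 hjn hz
    have hz' : f ⟨j - 1, by omega⟩ = 0 := by rw [← hFval2 j hj1 hjn]; exact hz
    rcases h0 _ hz' with ⟨u, hadj, hu2⟩ | ⟨x, y, hxy, hax, hay, hx1, hy1⟩
    · rcases hadj' j hj1 hjn u hadj with ⟨h, _⟩ | ⟨h, _, _⟩ <;> omega
    · rcases hadj' j hj1 hjn x hax with ⟨hx, hx2⟩ | ⟨hx, hx2, _⟩ <;>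
        rcases hadj' j hj1 hjn y hay with ⟨hy, hy2⟩ | ⟨hy, hy2, _⟩
      · exact absurd (Fin.ext (show x.val = y.val by omega)) hxy
      · omega
      · omega
      · exact absurd (Fin.ext (show x.val = y.val by omega)) hxy
  have h1' : ∀ j, 1 ≤ j → j ≤ n → 0 < F j → 0 < F (j-1) + F (j+1) := by
    intro j hj1 hjn hp
    have hp' : 0 < f ⟨j - 1, by omega⟩ := by rw [← hFval2 j hj1 hjn]; exact hp
    obtain ⟨u, hadj, hu⟩ := h1 _ hp'
    rcases hadj' j hj1 hjn u hadj with ⟨h, _⟩ | ⟨h, _, _⟩ <;> omega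
  have he1 : F 1 = 0 → F 2 = 2 := by
    intro hz
    have hz' : f ⟨1 - 1, by omega⟩ = 0 := by rw [← hFval2 1 (by omega) (by omega)]; exact hz
    rcases h0 _ hz' with ⟨u, hadj, hu2⟩ | ⟨x, y, hxy, hax, hay, hx1, hy1⟩
    · rcases hadj' 1 (by omega) (by omega) u hadj with ⟨_, h⟩ | ⟨h, _, _⟩
      · omega
      · have h2 : F 2 = f u := h
        omega
    · rcases hadj' 1 (by omega) (by omega) x hax with ⟨_, hx2⟩ | ⟨_, hx2, _⟩ <;>
        rcases hadj' 1 (by omega) (by omega) y hay with ⟨_, hy2⟩ | ⟨_, hy2, _⟩ <;>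
        first
          | omega
          | exact absurd (Fin.ext (show x.val = y.val by omega)) hxy
  have he2 : F n = 0 → F (n-1) = 2 := by
    intro hz
    have hz' : f ⟨n - 1, by omega⟩ = 0 := by rw [← hFval2 n (by omega) (by omega)]; exact hz
    rcases h0 _ hz' with ⟨u, hadj, hu2⟩ | ⟨x, y, hxy, hax, hay, hx1, hy1⟩
    · rcases hadj' n (by omega) (by omega) u hadj with ⟨h, _⟩ | ⟨_, _, h⟩
      · omega
      · omega
    · rcases hadj' n (by omega) (by omega) x hax with ⟨_, hx2⟩ | ⟨_, _, h⟩ <;>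
        rcases hadj' n (by omega) (by omega) y hay with ⟨_, hy2⟩ | ⟨_, _, h'⟩ <;>
        first
          | omega
          | exact absurd (Fin.ext (show x.val = y.val by omega)) hxy
  have hsum : ∑ v, f v = ∑ j ∈ Finset.range n, F (j+1) := by
    rw [← Fin.sum_univ_eq_sum_range (fun j => F (j+1)) n]
    apply Finset.sum_congr rfl
    intro i _
    rw [hFval i.val i.isLt, Fin.eta]
  rw [hsum]
  exact core n hn F hF0 hFtop h0' h1' he1 he2

lemma upper (n : ℕ) (hn : 2 ≤ n) :
    ∃ f : Fin n → ℕ, IsTR2DF (SimpleGraph.pathGraph n) f ∧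
      ∑ v, f v = (2 * n + 2 + 2) / 3 := by
  set f : Fin n → ℕ :=
    fun i => g0 i.val + (if i.val = n - 2 ∧ n % 3 ≠ 2 then 1 else 0) with hfdef
  have hadjmk : ∀ (a b : ℕ) (ha : a < n) (hb : b < n), (a + 1 = b ∨ b + 1 = a) →
      (SimpleGraph.pathGraph n).Adj ⟨a, ha⟩ ⟨b, hb⟩ := by
    intro a b ha hb h
    rw [SimpleGraph.pathGraph_adj]
    exact h
  have hle : ∀ v, f v ≤ 2 := by
    intro v
    simp only [hfdef, g0]
    split_ifs <;> omega
  have hpos2 : ∀ (j : ℕ) (hj : j < n),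
      (j % 3 ≠ 2 ∨ (j = n - 2 ∧ n % 3 ≠ 2)) → 0 < f ⟨j, hj⟩ := by
    intro j hj h
    simp only [hfdef, g0]
    split_ifs with a b <;> omega
  have hval2 : ∀ (j : ℕ) (hj : j < n), j = n - 2 → n % 3 ≠ 2 → j % 3 ≠ 2 →
      f ⟨j, hj⟩ = 2 := by
    intro j hj h1 h2 h3
    simp only [hfdef, g0]
    split_ifs with a b <;> omega
  have hval1 : ∀ (j : ℕ) (hj : j < n), j % 3 ≠ 2 →
      ¬(j = n - 2 ∧ n % 3 ≠ 2) → f ⟨j, hj⟩ = 1 := by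
    intro j hj h1 h2
    simp only [hfdef, g0]
    split_ifs with a b <;> omega
  refine ⟨f, ⟨hle, ?_, ?_⟩, ?_⟩
  · -- domination of zeros
    rintro ⟨i, hi⟩ hv0
    have hkey : i % 3 = 2 ∧ ¬(i = n - 2 ∧ n % 3 ≠ 2) := by
      simp only [hfdef, g0] at hv0
      split_ifs at hv0 with a b <;> omega
    obtain ⟨hmod, hnb⟩ := hkey
    have hi2 : 2 ≤ i := by omega
    have hn3 : 3 ≤ n := by omega
    by_cases hlast : i = n - 1
    · left
      exact ⟨⟨n - 2, by omega⟩, hadjmk _ _ _ _ (by omega),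
        hval2 (n-2) (by omega) rfl (by omega) (by omega)⟩
    · have hin2 : i + 1 < n := by omega
      by_cases hbump : i + 1 = n - 2 ∧ n % 3 ≠ 2
      · left
        exact ⟨⟨i + 1, hin2⟩, hadjmk _ _ _ _ (by omega),
          hval2 (i+1) hin2 hbump.1 hbump.2 (by omega)⟩
      · right
        refine ⟨⟨i - 1, by omega⟩, ⟨i + 1, hin2⟩, ?_,
          hadjmk _ _ _ _ (by omega), hadjmk _ _ _ _ (by omega),
          hval1 (i-1) (by omega) (by omega) (by omega),
          hval1 (i+1) hin2 (by omega) hbump⟩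
        simp only [ne_eq, Fin.mk.injEq]
        omega
  · -- total condition
    rintro ⟨i, hi⟩ hvpos
    by_cases h0m : i % 3 = 0
    · by_cases hl : i + 1 < n
      · exact ⟨⟨i + 1, hl⟩, hadjmk _ _ _ _ (by omega), hpos2 _ _ (Or.inl (by omega))⟩
      · have hil : i = n - 1 := by omega
        have hn1 : n % 3 = 1 := by omega
        refine ⟨⟨i - 1, by omega⟩, hadjmk _ _ _ _ (by omega),
          hpos2 _ _ (Or.inr ⟨by omega, by omega⟩)⟩
    · by_cases h1m : i % 3 = 1
      · exact ⟨⟨i - 1, by omega⟩, hadjmk _ _ _ _ (by omega), hpos2 _ _ (Or.inl (by omega))⟩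
      · have hkey : i = n - 2 ∧ n % 3 ≠ 2 := by
          simp only [hfdef, g0] at hvpos
          split_ifs at hvpos with a b
          · exact b
          · omega
          · omega
          · omega
        have hn1 : n % 3 = 1 := by omega
        have hn4 : 4 ≤ n := by omega
        exact ⟨⟨i - 1, by omega⟩, hadjmk _ _ _ _ (by omega), hpos2 _ _ (Or.inl (by omega))⟩
  · -- the sum
    have e0 : ∑ v, f v = ∑ j ∈ Finset.range n,
        (g0 j + (if j = n - 2 ∧ n % 3 ≠ 2 then 1 else 0)) := by
      rw [← Fin.sum_univ_eq_sum_range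
        (fun j => g0 j + (if j = n - 2 ∧ n % 3 ≠ 2 then 1 else 0)) n]
    rw [e0, Finset.sum_add_distrib, sum_g0]
    have e1 : ∑ j ∈ Finset.range n, (if j = n - 2 ∧ n % 3 ≠ 2 then 1 else 0) =
        if n % 3 ≠ 2 then 1 else 0 := by
      by_cases hc : n % 3 = 2
      · simp [hc]
      · have e : ∀ j ∈ Finset.range n,
            (if j = n - 2 ∧ n % 3 ≠ 2 then (1:ℕ) else 0) =
            (if j = n - 2 then (1:ℕ) else 0) := by
          intro j _; simp [hc]
        rw [Finset.sum_congr rfl e,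
          Finset.sum_ite_eq' (Finset.range n) (n-2) (fun _ => (1:ℕ))]
        simp only [Finset.mem_range, hc]
        rw [if_pos (by omega), if_pos (by omega)]
    rw [e1]
    split_ifs with h <;> omega

end TR2aux

theorem stmt6 (n : ℕ) (hn : 2 ≤ n) :
    tR2 (SimpleGraph.pathGraph n) = (2 * n + 2 + 2) / 3 := by
  obtain ⟨f, hf, hsum⟩ := TR2aux.upper n hn
  have hmem : (2 * n + 2 + 2) / 3 ∈
      {w | ∃ f : Fin n → ℕ, IsTR2DF (SimpleGraph.pathGraph n) f ∧ ∑ v, f v = w} :=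
    ⟨f, hf, hsum⟩
  refine le_antisymm (Nat.sInf_le hmem) ?_
  apply le_csInf ⟨_, hmem⟩
  rintro w ⟨g, hg, rfl⟩
  have := TR2aux.lower n hn g hg
  omega
end

section
/- For the cycle C_n with n ≥ 3, the total Roman {2}-domination number equals ⌈2n/3⌉. -/
open Fin.CommRing in
lemma cycle_adj_iff (m : ℕ) (u v : Fin (m+3)) :
    (SimpleGraph.cycleGraph (m+3)).Adj u v ↔ u = v - 1 ∨ u = v + 1 := by
  rw [SimpleGraph.cycleGraph_adj (n := m+1)]
  constructor
  · rintro (h | h)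
    · right; rw [← h]; ring
    · left; rw [← h]; ring
  · rintro (h | h) <;> subst h
    · right; ring
    · left; ring

open Fin.CommRing in
lemma sub_ne_add (m : ℕ) (v : Fin (m+3)) : v - 1 ≠ v + 1 := by
  intro h
  have h2 : (1 + 1 : Fin (m+3)) = 0 := by linear_combination -h
  have := congrArg Fin.val h2
  rw [Fin.val_add_one] at this
  simp [Fin.ext_iff, Fin.val_one, Fin.last] at this

/-- the explicit TR2DF on the cycle -/
lemma explicit_TR2DF (m : ℕ) :
    IsTR2DF (SimpleGraph.cycleGraph (m+3))
      (fun v => if (v : ℕ) % 3 = 2 then 0 else 1) := by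
  have hadj1 : ∀ v : Fin (m+3), (SimpleGraph.cycleGraph (m+3)).Adj (v - 1) v := by
    intro v; rw [cycle_adj_iff]; left; rfl
  have hadj2 : ∀ v : Fin (m+3), (SimpleGraph.cycleGraph (m+3)).Adj (v + 1) v := by
    intro v; rw [cycle_adj_iff]; right; rfl
  refine ⟨fun v => by dsimp; split <;> omega, ?_, ?_⟩
  · intro v hv
    dsimp at hv
    have hv2 : (v : ℕ) % 3 = 2 := by by_contra h; simp [h] at hv
    right
    refine ⟨v - 1, v + 1, sub_ne_add m v, hadj1 v, hadj2 v, ?_, ?_⟩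
    · have h0 : v ≠ 0 := by
        intro h; subst h; simp at hv2
      have := Fin.coe_sub_one v
      rw [if_neg h0] at this
      simp only [this]
      have hvpos : 0 < (v : ℕ) := by
        rcases Nat.eq_zero_or_pos (v : ℕ) with h | h
        · exact absurd (Fin.ext h) h0
        · exact h
      rw [if_neg (by omega)]
    · have := Fin.val_add_one v
      by_cases hl : v = Fin.last (m+2)
      · rw [if_pos hl] at this
        simp only [this]
        rfl
      · rw [if_neg hl] at this
        simp only [this]
        rw [if_neg (by omega)]
  · intro v hv
    dsimp only at hv
    have hv2 : (v : ℕ) % 3 ≠ 2 := by intro h; simp [h] at hv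
    rcases Nat.lt_or_ge ((v : ℕ) % 3) 1 with h1 | h1
    · -- v % 3 = 0, use v + 1
      refine ⟨v + 1, hadj2 v, ?_⟩
      have := Fin.val_add_one v
      by_cases hl : v = Fin.last (m+2)
      · rw [if_pos hl] at this
        simp only [this]
        norm_num
      · rw [if_neg hl] at this
        dsimp only
        rw [this, if_neg (by omega)]
        norm_num
    · -- v % 3 = 1, use v - 1
      have hv1 : (v : ℕ) % 3 = 1 := by omega
      refine ⟨v - 1, hadj1 v, ?_⟩
      have h0 : v ≠ 0 := by
        intro h; subst h; simp at hv1
      have := Fin.coe_sub_one v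
      rw [if_neg h0] at this
      dsimp only
      rw [this, if_neg ?_]
      · norm_num
      · have hvpos : 0 < (v : ℕ) := by
          rcases Nat.eq_zero_or_pos (v : ℕ) with h | h
          · exact absurd (Fin.ext h) h0
          · exact h
        omega

lemma explicit_sum (n : ℕ) :
    ∑ v : Fin n, (if (v : ℕ) % 3 = 2 then 0 else 1) = (2 * n + 2) / 3 := by
  rw [Fin.sum_univ_eq_sum_range (fun k => if k % 3 = 2 then 0 else 1) n]
  induction n with
  | zero => simp
  | succ k ih =>
    rw [Finset.sum_range_succ, ih]
    by_cases h : k % 3 = 2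
    · rw [if_pos h]
      obtain ⟨j, rfl⟩ : ∃ j, k = 3*j+2 := ⟨k/3, by omega⟩
      omega
    · rw [if_neg h]
      obtain ⟨j, hj⟩ : ∃ j, k = 3*j ∨ k = 3*j+1 := ⟨k/3, by omega⟩
      rcases hj with rfl | rfl <;> omega

lemma window_bound (m : ℕ) (f : Fin (m+3) → ℕ)
    (hf : IsTR2DF (SimpleGraph.cycleGraph (m+3)) f) (v : Fin (m+3)) :
    2 ≤ f (v - 1) + f v + f (v + 1) := by
  obtain ⟨hle, hdom, htot⟩ := hf
  rcases Nat.eq_zero_or_pos (f v) with h0 | h0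
  · rcases hdom v h0 with ⟨u, hu, hu2⟩ | ⟨x, y, hxy, hx, hy, hx1, hy1⟩
    · rw [cycle_adj_iff] at hu
      rcases hu with rfl | rfl <;> omega
    · rw [cycle_adj_iff] at hx hy
      rcases hx with rfl | rfl <;> rcases hy with rfl | rfl <;> simp_all
  · obtain ⟨u, hu, hupos⟩ := htot v h0
    rw [cycle_adj_iff] at hu
    rcases hu with rfl | rfl <;> omega

lemma lower_bound (m : ℕ) (f : Fin (m+3) → ℕ)
    (hf : IsTR2DF (SimpleGraph.cycleGraph (m+3)) f) :
    2 * (m+3) ≤ 3 * ∑ v, f v := by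
  have key : ∑ v : Fin (m+3), 2 ≤ ∑ v : Fin (m+3), (f (v - 1) + f v + f (v + 1)) :=
    Finset.sum_le_sum (fun v _ => window_bound m f hf v)
  have e1 : ∑ v : Fin (m+3), f (v - 1) = ∑ v, f v :=
    Fintype.sum_equiv (Equiv.subRight 1) _ _ (fun v => rfl)
  have e2 : ∑ v : Fin (m+3), f (v + 1) = ∑ v, f v :=
    Fintype.sum_equiv (Equiv.addRight 1) _ _ (fun v => rfl)
  rw [Finset.sum_add_distrib, Finset.sum_add_distrib, e1, e2] at key
  simp only [Finset.sum_const, Finset.card_univ, Fintype.card_fin, smul_eq_mul] at key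
  omega

theorem stmt7 (n : ℕ) (hn : 3 ≤ n) :
    tR2 (SimpleGraph.cycleGraph n) = (2 * n + 2) / 3 := by
  obtain ⟨m, rfl⟩ : ∃ m, n = m + 3 := ⟨n - 3, by omega⟩
  have hmem : (2 * (m+3) + 2) / 3 ∈
      {w | ∃ f : Fin (m+3) → ℕ, IsTR2DF (SimpleGraph.cycleGraph (m+3)) f ∧ ∑ v, f v = w} :=
    ⟨fun v => if (v : ℕ) % 3 = 2 then 0 else 1, explicit_TR2DF m, explicit_sum (m+3)⟩
  refine le_antisymm (Nat.sInf_le hmem) (le_csInf ⟨_, hmem⟩ ?_)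
  rintro w ⟨f, hf, rfl⟩
  have := lower_bound m f hf
  omega
end

section
/- For any graph H, the join K_2 ∨ H has total Roman {2}-domination number equal to 2. Conversely, if a nontrivial connected graph G satisfies γ_{tR2}(G) = 2, then G contains two adjacent vertices x, y such that every other vertex of G is adjacent to both x and y (i.e., G = K_2 ∨ H for some graph H). -/
lemma pair_le_sum {V : Type*} [Fintype V] (f : V → ℕ) {u v : V} (h : u ≠ v) :
    f u + f v ≤ ∑ w, f w := by
  classical
  rw [← Finset.sum_pair h]
  exact Finset.sum_le_sum_of_subset (Finset.subset_univ _)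

lemma single_le_sum' {V : Type*} [Fintype V] (f : V → ℕ) (v : V) :
    f v ≤ ∑ w, f w :=
  Finset.single_le_sum (fun _ _ => Nat.zero_le _) (Finset.mem_univ v)

lemma tr2_lower {V : Type*} [Fintype V] (G : SimpleGraph V) (hnt : Nontrivial V)
    (f : V → ℕ) (hf : IsTR2DF G f) : 2 ≤ ∑ v, f v := by
  obtain ⟨hb, hdom, htot⟩ := hf
  by_contra hlt
  push_neg at hlt
  by_cases h0 : ∀ v, f v = 0
  · obtain ⟨v⟩ := (inferInstance : Nonempty V)
    rcases hdom v (h0 v) with ⟨u, _, hu2⟩ | ⟨a, b, _, _, _, ha, _⟩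
    · rw [h0 u] at hu2; omega
    · rw [h0 a] at ha; omega
  · push_neg at h0
    obtain ⟨v, hv⟩ := h0
    obtain ⟨u, hadj, hu⟩ := htot v (Nat.pos_of_ne_zero hv)
    have hne : u ≠ v := G.ne_of_adj hadj
    have := pair_le_sum f hne
    omega

theorem stmt8 {V : Type*} [Fintype V] (G : SimpleGraph V)
    (hconn : G.Connected) (hnt : Nontrivial V) :
    tR2 G = 2 ↔ ∃ x y : V, x ≠ y ∧ G.Adj x y ∧
      ∀ z : V, z ≠ x → z ≠ y → G.Adj z x ∧ G.Adj z y := by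
  classical
  constructor
  · intro h
    have hne : {w | ∃ f : V → ℕ, IsTR2DF G f ∧ ∑ v, f v = w}.Nonempty := by
      by_contra hc
      rw [Set.not_nonempty_iff_eq_empty] at hc
      rw [tR2, hc, Nat.sInf_empty] at h
      omega
    have hmem := Nat.sInf_mem hne
    rw [← tR2, h] at hmem
    obtain ⟨f, hf, hsum⟩ := hmem
    obtain ⟨hb, hdom, htot⟩ := hf
    -- no vertex with value 2
    have h2 : ∀ u, f u ≠ 2 := by
      intro u hu
      obtain ⟨w, hadj, hw⟩ := htot u (by omega)
      have hne' : w ≠ u := G.ne_of_adj hadj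
      have := pair_le_sum f hne'
      omega
    have h1 : ∀ u, f u ≤ 1 := fun u => by have := hb u; have := h2 u; omega
    -- find x with f x = 1
    have hx : ∃ x, f x = 1 := by
      by_contra hc
      push_neg at hc
      have : ∀ v, f v = 0 := fun v => by have := h1 v; have := hc v; omega
      rw [Finset.sum_eq_zero (fun v _ => this v)] at hsum
      omega
    obtain ⟨x, hxv⟩ := hx
    -- find y ≠ x with f y = 1
    have hy : ∃ y, y ≠ x ∧ f y = 1 := by
      by_contra hc
      push_neg at hc
      have hall : ∀ v, v ≠ x → f v = 0 := by
        intro v hv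
        have := h1 v
        have := hc v hv
        omega
      have : ∑ v, f v = f x := by
        rw [← Finset.sum_subset (Finset.subset_univ {x})]
        · simp
        · intro v _ hv
          exact hall v (by simpa using hv)
      omega
    obtain ⟨y, hyx, hyv⟩ := hy
    have hrest : ∀ z, z ≠ x → z ≠ y → f z = 0 := by
      intro z hzx hzy
      by_contra hzc
      have hz1 : f z = 1 := by have := h1 z; omega
      have h3 : f x + f z ≤ ∑ w ∈ Finset.univ.erase y, f w := by
        rw [← Finset.sum_pair (Ne.symm hzx)]
        apply Finset.sum_le_sum_of_subset
        intro w hw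
        simp only [Finset.mem_insert, Finset.mem_singleton] at hw
        rcases hw with rfl | rfl <;> simp [Ne.symm hyx, hzy]
      have h4 : f y + ∑ w ∈ Finset.univ.erase y, f w = ∑ w, f w :=
        Finset.add_sum_erase _ f (Finset.mem_univ y)
      omega
    have hpos : ∀ u, 0 < f u → u = x ∨ u = y := by
      intro u hu
      by_contra hc
      push_neg at hc
      have := hrest u hc.1 hc.2
      omega
    -- x and y adjacent
    obtain ⟨u, hadj, hu⟩ := htot x (by omega)
    have hux : u ≠ x := G.ne_of_adj hadj
    have huy : u = y := (hpos u hu).resolve_left hux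
    rw [huy] at hadj
    refine ⟨x, y, hyx.symm, (G.adj_symm hadj), ?_⟩
    intro z hzx hzy
    rcases hdom z (hrest z hzx hzy) with ⟨w, _, hw2⟩ | ⟨a, b, hab, haz, hbz, ha, hb'⟩
    · exact absurd hw2 (h2 w)
    · have hax := hpos a (by omega)
      have hbx := hpos b (by omega)
      rcases hax with rfl | rfl <;> rcases hbx with rfl | rfl
      · exact absurd rfl hab
      · exact ⟨haz.symm, hbz.symm⟩
      · exact ⟨hbz.symm, haz.symm⟩
      · exact absurd rfl hab
  · rintro ⟨x, y, hxy, hadj, hdom⟩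
    set f : V → ℕ := fun v => if v = x ∨ v = y then 1 else 0 with hfdef
    have hfx : f x = 1 := by simp [hfdef]
    have hfy : f y = 1 := by simp [hfdef]
    have hftr : IsTR2DF G f := by
      refine ⟨fun v => by by_cases hv : v = x ∨ v = y <;> simp [hfdef, hv], ?_, ?_⟩
      · intro v hv
        have hvx : v ≠ x := by rintro rfl; rw [hfx] at hv; omega
        have hvy : v ≠ y := by rintro rfl; rw [hfy] at hv; omega
        obtain ⟨h1, h2⟩ := hdom v hvx hvy
        exact Or.inr ⟨x, y, hxy, h1.symm, h2.symm, hfx, hfy⟩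
      · intro v hv
        by_cases hvx : v = x
        · exact ⟨y, by rw [hvx]; exact hadj.symm, by rw [hfy]; omega⟩
        · have hvy : v = y := by
            by_contra hc
            simp [hfdef, hvx, hc] at hv
          exact ⟨x, by rw [hvy]; exact hadj, by rw [hfx]; omega⟩
    have hfsum : ∑ v, f v = 2 := by
      have : ∑ v, f v = ∑ v ∈ ({x, y} : Finset V), f v := by
        symm
        apply Finset.sum_subset (Finset.subset_univ _)
        intro v _ hv
        simp only [Finset.mem_insert, Finset.mem_singleton] at hv
        push_neg at hv
        simp [hfdef, hv.1, hv.2]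
      rw [this, Finset.sum_pair hxy, hfx, hfy]
    have hmem : (2 : ℕ) ∈ {w | ∃ f : V → ℕ, IsTR2DF G f ∧ ∑ v, f v = w} :=
      ⟨f, hftr, hfsum⟩
    have hle : tR2 G ≤ 2 := Nat.sInf_le hmem
    have hge : 2 ≤ tR2 G := by
      have := Nat.sInf_mem ⟨2, hmem⟩
      obtain ⟨g, hg, hgsum⟩ := this
      rw [tR2, ← hgsum]
      exact tr2_lower G hnt g hg
    omega
end

section
/- Let G be a nontrivial connected graph of order n. Then γ_{tR2}(G) = n if and only if G ∈ {K_2, K_{1,2}} or every vertex of G is either a leaf or a weak support vertex (a vertex adjacent to exactly one leaf). -/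
section Aux

variable {V : Type*}

lemma myExistsAdj (G : SimpleGraph V) (hconn : G.Connected)
    (hnt : Nontrivial V) (v : V) : ∃ u, G.Adj u v := by
  obtain ⟨w, hw⟩ := exists_ne v
  obtain ⟨p⟩ := hconn.preconnected v w
  cases p with
  | nil => exact absurd rfl hw
  | cons h q => exact ⟨_, h.symm⟩

lemma myMemN [Fintype V] (G : SimpleGraph V) (hconn : G.Connected)
    (hnt : Nontrivial V) :
    (Fintype.card V) ∈ {w | ∃ f : V → ℕ, IsTR2DF G f ∧ ∑ v, f v = w} := by
  refine ⟨fun _ => 1, ⟨fun v => by norm_num, fun v hv => by simp at hv,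
    fun v _ => ?_⟩, by simp⟩
  obtain ⟨u, hu⟩ := myExistsAdj G hconn hnt v
  exact ⟨u, hu, one_pos⟩

lemma myLeafPair [Fintype V] (G : SimpleGraph V) [DecidableRel G.Adj]
    {f : V → ℕ} (hf : IsTR2DF G f) {l u : V} (hl : G.degree l = 1)
    (hadj : G.Adj l u) : 2 ≤ f l + f u := by
  have huniq : ∀ w, G.Adj l w → w = u := fun w hw =>
    Finset.card_le_one.mp hl.le w (G.mem_neighborFinset l w |>.mpr hw) u
      (G.mem_neighborFinset l u |>.mpr hadj)
  rcases Nat.eq_zero_or_pos (f l) with h0 | hpos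
  · rcases hf.2.1 l h0 with ⟨w, hwl, hw2⟩ | ⟨x, y, hxy, hx, hy, _, _⟩
    · have hh := huniq w hwl.symm; subst hh; omega
    · exact absurd ((huniq x hx.symm).trans (huniq y hy.symm).symm) hxy
  · obtain ⟨w, hwl, hwpos⟩ := hf.2.2 l hpos
    have hh := huniq w hwl.symm; subst hh; omega

lemma myLowerCond3 [Fintype V] (G : SimpleGraph V) [DecidableRel G.Adj]
    (h3 : ∀ v : V, G.degree v = 1 ∨ (∃! u : V, G.Adj v u ∧ G.degree u = 1))
    {f : V → ℕ} (hf : IsTR2DF G f) : Fintype.card V ≤ ∑ v, f v := by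
  classical
  have hex : ∀ v : V, ∃ u, G.Adj v u ∧ (G.degree u = 1 ∨ G.degree v = 1) := by
    intro v
    rcases h3 v with hd | ⟨u, ⟨hu, hud⟩, _⟩
    · have hpos : 0 < G.degree v := by omega
      obtain ⟨u, hu⟩ := G.degree_pos_iff_exists_adj v |>.mp hpos
      exact ⟨u, hu, Or.inr hd⟩
    · exact ⟨u, hu, Or.inl hud⟩
  have uniq : ∀ v u u', G.Adj v u ∧ (G.degree u = 1 ∨ G.degree v = 1) →
      G.Adj v u' ∧ (G.degree u' = 1 ∨ G.degree v = 1) → u = u' := by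
    intro v u u' hu hu'
    by_cases hdv : G.degree v = 1
    · exact Finset.card_le_one.mp hdv.le u (G.mem_neighborFinset v u |>.mpr hu.1) u'
        (G.mem_neighborFinset v u' |>.mpr hu'.1)
    · rcases h3 v with hd | ⟨w, _, hwu⟩
      · exact absurd hd hdv
      · have h1 : u = w := hwu u ⟨hu.1, hu.2.resolve_right hdv⟩
        have h2 : u' = w := hwu u' ⟨hu'.1, hu'.2.resolve_right hdv⟩
        rw [h1, h2]
  choose σ hσ using hex
  have invol : Function.Involutive σ := by
    intro v
    exact uniq (σ v) (σ (σ v)) v (hσ (σ v)) ⟨(hσ v).1.symm, (hσ v).2.symm⟩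
  have pair : ∀ v, 2 ≤ f v + f (σ v) := by
    intro v
    rcases (hσ v).2 with hd | hd
    · have := myLeafPair G hf hd (hσ v).1.symm; omega
    · exact myLeafPair G hf hd (hσ v).1
  have hsum2 : ∑ v, f (σ v) = ∑ v, f v :=
    Fintype.sum_bijective σ invol.bijective _ _ (fun x => rfl)
  have hle : ∑ _v : V, (2:ℕ) ≤ ∑ v, (f v + f (σ v)) :=
    Finset.sum_le_sum (fun v _ => pair v)
  rw [Finset.sum_add_distrib, hsum2, Finset.sum_const, Finset.card_univ,
    smul_eq_mul] at hle
  omega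

lemma myP2cond [Fintype V] (G : SimpleGraph V) [DecidableRel G.Adj]
    (e : G ≃g SimpleGraph.pathGraph 2) : ∀ v : V, G.degree v = 1 := by
  set a := e.symm 0 with ha
  set b := e.symm 1 with hb
  have hab : G.Adj a b := by
    rw [ha, hb]
    exact e.symm.map_adj_iff.mpr (by rw [SimpleGraph.pathGraph_adj]; decide)
  have hall : ∀ v : V, v = a ∨ v = b := by
    intro v
    have : e v = 0 ∨ e v = 1 := by omega
    rcases this with h | h
    · left; rw [ha, ← h]; exact (e.symm_apply_apply v).symm
    · right; rw [hb, ← h]; exact (e.symm_apply_apply v).symm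
  have hNa : ∀ u, G.Adj a u → u = b := by
    intro u hu
    rcases hall u with h | h
    · exact absurd (h ▸ hu) (G.irrefl)
    · exact h
  have hNb : ∀ u, G.Adj b u → u = a := by
    intro u hu
    rcases hall u with h | h
    · exact h
    · exact absurd (h ▸ hu) (G.irrefl)
  intro v
  rcases hall v with h | h <;> subst h
  · have : G.neighborFinset a = {b} := by
      ext u
      simp only [SimpleGraph.mem_neighborFinset, Finset.mem_singleton]
      exact ⟨hNa u, fun h => h ▸ hab⟩
    rw [SimpleGraph.degree, this, Finset.card_singleton]
  · have : G.neighborFinset b = {a} := by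
      ext u
      simp only [SimpleGraph.mem_neighborFinset, Finset.mem_singleton]
      exact ⟨hNb u, fun h => h ▸ hab.symm⟩
    rw [SimpleGraph.degree, this, Finset.card_singleton]

lemma myP3lower [Fintype V] (G : SimpleGraph V) [DecidableRel G.Adj]
    (e : G ≃g SimpleGraph.pathGraph 3) {f : V → ℕ} (hf : IsTR2DF G f) :
    Fintype.card V ≤ ∑ v, f v := by
  set a := e.symm 0 with ha
  set b := e.symm 1 with hb
  set c := e.symm 2 with hc
  have hadj : ∀ i j : Fin 3, (SimpleGraph.pathGraph 3).Adj i j ↔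
      (i.val + 1 = j.val ∨ j.val + 1 = i.val) :=
    fun i j => SimpleGraph.pathGraph_adj
  have hmap : ∀ (u : V) (i : Fin 3), G.Adj u (e.symm i) →
      (e u).val + 1 = i.val ∨ i.val + 1 = (e u).val := by
    intro u i hu
    have : G.Adj (e.symm (e u)) (e.symm i) := by
      rwa [e.symm_apply_apply u]
    rw [e.symm.map_adj_iff, hadj] at this
    exact this
  have heq : ∀ (u : V) (i : Fin 3), e u = i → u = e.symm i := by
    intro u i h
    rw [← h, e.symm_apply_apply u]
  have hNa : ∀ u, G.Adj u a → u = b := by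
    intro u hu
    have := hmap u 0 hu
    apply heq; omega
  have hNc : ∀ u, G.Adj u c → u = b := by
    intro u hu
    have := hmap u 2 hu
    apply heq; omega
  have hNb : ∀ u, G.Adj u b → u = a ∨ u = c := by
    intro u hu
    have := hmap u 1 hu
    have h2 : e u = 0 ∨ e u = 2 := by omega
    rcases h2 with h | h
    · exact Or.inl (heq u 0 h)
    · exact Or.inr (heq u 2 h)
  have hab : G.Adj a b := e.symm.map_adj_iff.mpr (by rw [hadj]; decide)
  have hbc : G.Adj b c := e.symm.map_adj_iff.mpr (by rw [hadj]; decide)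
  have hbpos : 0 < f b := by
    by_contra hb0
    have hb0 : f b = 0 := by omega
    rcases hf.2.1 b hb0 with ⟨u, hu, hu2⟩ | ⟨x, y, hxy, hx, hy, hx1, hy1⟩
    · have hupos : 0 < f u := by omega
      obtain ⟨w, hw, hwpos⟩ := hf.2.2 u hupos
      rcases hNb u hu with h | h <;> subst h
      · have hwb := hNa w hw; subst hwb; omega
      · have hwb := hNc w hw; subst hwb; omega
    · have hx' : 0 < f x := by omega
      obtain ⟨w, hw, hwpos⟩ := hf.2.2 x hx'
      rcases hNb x hx with h | h <;> subst h
      · have hwb := hNa w hw; subst hwb; omega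
      · have hwb := hNc w hw; subst hwb; omega
  have hac : 0 < f a ∨ 0 < f c := by
    obtain ⟨u, hu, hupos⟩ := hf.2.2 b hbpos
    rcases hNb u hu with h | h
    · exact Or.inl (h ▸ hupos)
    · exact Or.inr (h ▸ hupos)
  have hsum3 : ∑ v, f v = f a + f b + f c := by
    have := Equiv.sum_comp e.toEquiv.symm f
    rw [← this, Fin.sum_univ_three]
    rfl
  have hcard : Fintype.card V = 3 := by
    rw [Fintype.card_congr e.toEquiv, Fintype.card_fin]
  rw [hcard, hsum3]
  rcases hac with hpa | hpc
  · rcases Nat.eq_zero_or_pos (f c) with h0 | hp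
    · rcases hf.2.1 c h0 with ⟨u, hu, hu2⟩ | ⟨x, y, hxy, hx, hy, _, _⟩
      · have := hNc u hu; subst this; omega
      · exact absurd ((hNc x hx).trans (hNc y hy).symm) hxy
    · omega
  · rcases Nat.eq_zero_or_pos (f a) with h0 | hp
    · rcases hf.2.1 a h0 with ⟨u, hu, hu2⟩ | ⟨x, y, hxy, hx, hy, _, _⟩
      · have := hNa u hu; subst this; omega
      · exact absurd ((hNa x hx).trans (hNa y hy).symm) hxy
    · omega

lemma myDegTwoP3 [Fintype V] (G : SimpleGraph V) [DecidableRel G.Adj]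
    (hconn : G.Connected)
    (hP3 : ¬ Nonempty (G ≃g SimpleGraph.pathGraph 3))
    (v l1 l2 : V)
    (hl1 : G.Adj v l1 ∧ G.degree l1 = 1) (hl2 : G.Adj v l2 ∧ G.degree l2 = 1)
    (hl21 : l2 ≠ l1) (hdeg2 : G.degree v = 2) : False := by
  classical
  have hvl1 : v ≠ l1 := G.ne_of_adj hl1.1
  have hvl2 : v ≠ l2 := G.ne_of_adj hl2.1
  have hu1 : ∀ w, G.Adj l1 w → w = v := fun w hw =>
    Finset.card_le_one.mp hl1.2.le w ((G.mem_neighborFinset l1 w).mpr hw) v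
      ((G.mem_neighborFinset l1 v).mpr hl1.1.symm)
  have hu2 : ∀ w, G.Adj l2 w → w = v := fun w hw =>
    Finset.card_le_one.mp hl2.2.le w ((G.mem_neighborFinset l2 w).mpr hw) v
      ((G.mem_neighborFinset l2 v).mpr hl2.1.symm)
  have hnbr : G.neighborFinset v = {l1, l2} := by
    refine (Finset.eq_of_subset_of_card_le ?_ ?_).symm
    · intro x hx
      rcases Finset.mem_insert.mp hx with h | h
      · rw [h]; exact (G.mem_neighborFinset v l1).mpr hl1.1
      · rw [Finset.mem_singleton] at h; rw [h]
        exact (G.mem_neighborFinset v l2).mpr hl2.1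
    · rw [Finset.card_pair (Ne.symm hl21)]
      exact le_of_eq hdeg2
  have step : ∀ x y : V, G.Adj x y → (x = v ∨ x = l1 ∨ x = l2) →
      (y = v ∨ y = l1 ∨ y = l2) := by
    intro x y hxy hx
    rcases hx with h | h | h <;> subst h
    · have : y ∈ G.neighborFinset x := (G.mem_neighborFinset x y).mpr hxy
      rw [hnbr] at this
      rcases Finset.mem_insert.mp this with h | h
      · exact Or.inr (Or.inl h)
      · exact Or.inr (Or.inr (Finset.mem_singleton.mp h))
    · exact Or.inl (hu1 y hxy)
    · exact Or.inl (hu2 y hxy)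
  have hall : ∀ x : V, x = v ∨ x = l1 ∨ x = l2 := by
    have key : ∀ (a b : V), G.Walk a b → (a = v ∨ a = l1 ∨ a = l2) →
        (b = v ∨ b = l1 ∨ b = l2) := by
      intro a b p
      induction p with
      | nil => exact id
      | cons hadj q ih => intro ha; exact ih (step _ _ hadj ha)
    intro x
    obtain ⟨p⟩ := hconn.preconnected v x
    exact key v x p (Or.inl rfl)
  have hn12 : ¬ G.Adj l1 l2 := fun h => hvl2 (hu1 l2 h).symm
  let eqv : V ≃ Fin 3 :=
    { toFun := fun x => if x = l1 then 0 else if x = v then 1 else 2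
      invFun := fun i => if i = 0 then l1 else if i = 1 then v else l2
      left_inv := by
        intro x
        rcases hall x with h | h | h <;> subst h <;>
          simp [hvl1, hl21, Ne.symm hvl2]
      right_inv := by
        intro i
        fin_cases i <;> simp [hvl1, hl21, Ne.symm hvl2] }
  have e1 : eqv l1 = 0 := by simp [eqv]
  have e2 : eqv v = 1 := by simp [eqv, hvl1]
  have e3 : eqv l2 = 2 := by simp [eqv, hl21, Ne.symm hvl2]
  refine hP3 ⟨{ toEquiv := eqv, map_rel_iff' := ?_ }⟩
  intro a b
  rcases hall a with h | h | h <;> subst h <;> rcases hall b with h | h | h <;>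
      subst h <;>
    simp only [e1, e2, e3, SimpleGraph.pathGraph_adj]
  · exact iff_of_false (by decide) (G.irrefl)
  · exact iff_of_true (by decide) hl1.1
  · exact iff_of_true (by decide) hl2.1
  · exact iff_of_true (by decide) hl1.1.symm
  · exact iff_of_false (by decide) (G.irrefl)
  · exact iff_of_false (by decide) hn12
  · exact iff_of_true (by decide) hl2.1.symm
  · exact iff_of_false (by decide) (fun h => hn12 h.symm)
  · exact iff_of_false (by decide) (G.irrefl)

lemma myCaseB [Fintype V] (G : SimpleGraph V) [DecidableRel G.Adj]
    (hconn : G.Connected) (hnt : Nontrivial V) (v : V)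
    (hdeg : 2 ≤ G.degree v)
    (hleaf : ¬ ∃ u, G.Adj v u ∧ G.degree u = 1) :
    ∃ f : V → ℕ, IsTR2DF G f ∧ ∑ x, f x = Fintype.card V - 1 := by
  classical
  set f : V → ℕ := fun x => if x = v then 0 else 1 with hfdef
  have hfv : f v = 0 := by simp [hfdef]
  have hfother : ∀ x, x ≠ v → f x = 1 := fun x hx => by simp [hfdef, hx]
  refine ⟨f, ⟨?_, ?_, ?_⟩, ?_⟩
  · intro x; simp only [hfdef]; split_ifs <;> omega
  · intro x hx0
    have hxv : x = v := by
      by_contra hc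
      rw [hfother x hc] at hx0; omega
    subst hxv
    right
    obtain ⟨a, ha, b, hb, hab⟩ :=
      Finset.one_lt_card.mp (show (1:ℕ) < G.degree x by omega)
    rw [G.mem_neighborFinset] at ha hb
    exact ⟨a, b, hab, ha.symm, hb.symm,
      hfother a (fun h => G.irrefl (h ▸ ha)),
      hfother b (fun h => G.irrefl (h ▸ hb))⟩
  · intro x hx
    have hxv : x ≠ v := by rintro rfl; omega
    by_contra hc
    push_neg at hc
    have hcv : ∀ u, G.Adj u x → u = v := by
      intro u hu
      by_contra h
      have := hc u hu
      rw [hfother u h] at this; omega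
    have hvx : G.Adj v x := by
      obtain ⟨u0, hu0⟩ := myExistsAdj G hconn hnt x
      rw [← hcv u0 hu0]; exact hu0
    have hdx : G.degree x = 1 := by
      have : G.neighborFinset x = {v} := by
        ext u
        simp only [SimpleGraph.mem_neighborFinset, Finset.mem_singleton]
        exact ⟨fun h => hcv u h.symm, fun h => h ▸ hvx.symm⟩
      rw [SimpleGraph.degree, this, Finset.card_singleton]
    exact hleaf ⟨x, hvx, hdx⟩
  · have key := Finset.sum_erase_add Finset.univ f (Finset.mem_univ v)
    rw [hfv, add_zero] at key
    rw [← key]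
    rw [Finset.sum_congr rfl (fun x hx => hfother x (Finset.ne_of_mem_erase hx))]
    rw [Finset.sum_const, smul_eq_mul, mul_one,
      Finset.card_erase_of_mem (Finset.mem_univ v), Finset.card_univ]

lemma myCaseA [Fintype V] (G : SimpleGraph V) [DecidableRel G.Adj]
    (hconn : G.Connected) (hnt : Nontrivial V) (v l1 l2 : V)
    (hl1 : G.Adj v l1 ∧ G.degree l1 = 1) (hl2 : G.Adj v l2 ∧ G.degree l2 = 1)
    (hl21 : l2 ≠ l1) (hdeg3 : 3 ≤ G.degree v) :
    (∃ f : V → ℕ, IsTR2DF G f ∧ ∑ x, f x = Fintype.card V - 3 + 2) ∧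
      3 ≤ Fintype.card V := by
  classical
  have hvl1 : v ≠ l1 := G.ne_of_adj hl1.1
  have hvl2 : v ≠ l2 := G.ne_of_adj hl2.1
  have hu1 : ∀ w, G.Adj l1 w → w = v := fun w hw =>
    Finset.card_le_one.mp hl1.2.le w ((G.mem_neighborFinset l1 w).mpr hw) v
      ((G.mem_neighborFinset l1 v).mpr hl1.1.symm)
  have hu2 : ∀ w, G.Adj l2 w → w = v := fun w hw =>
    Finset.card_le_one.mp hl2.2.le w ((G.mem_neighborFinset l2 w).mpr hw) v
      ((G.mem_neighborFinset l2 v).mpr hl2.1.symm)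
  have hnm1 : l1 ∉ ({l2, v} : Finset V) := by
    simp [Ne.symm hl21, Ne.symm hvl1]
  have hnm2 : l2 ∉ ({v} : Finset V) := by simp [Ne.symm hvl2]
  have hcards : ({l1, l2, v} : Finset V).card = 3 := by
    rw [Finset.card_insert_of_notMem hnm1, Finset.card_insert_of_notMem hnm2,
      Finset.card_singleton]
  have hcard3 : 3 ≤ Fintype.card V := by
    rw [← hcards, ← Finset.card_univ]
    exact Finset.card_le_univ _
  set f : V → ℕ := fun x => if x = l1 ∨ x = l2 then 0 else if x = v then 2 else 1
    with hfdef
  have hfl1 : f l1 = 0 := by simp [hfdef]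
  have hfl2 : f l2 = 0 := by simp [hfdef]
  have hfv : f v = 2 := by simp [hfdef, hvl1, hvl2]
  have hfother : ∀ x, x ≠ l1 → x ≠ l2 → x ≠ v → f x = 1 := fun x h1 h2 h3 => by
    simp [hfdef, h1, h2, h3]
  refine ⟨⟨f, ⟨?_, ?_, ?_⟩, ?_⟩, hcard3⟩
  · intro x; simp only [hfdef]; split_ifs <;> omega
  · intro x hx0
    have hx : x = l1 ∨ x = l2 := by
      by_contra hc
      push_neg at hc
      by_cases hxv : x = v
      · subst hxv; omega
      · rw [hfother x hc.1 hc.2 hxv] at hx0; omega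
    left
    rcases hx with h | h <;> subst h
    · exact ⟨v, hl1.1, hfv⟩
    · exact ⟨v, hl2.1, hfv⟩
  · intro x hx
    have hx1 : x ≠ l1 := by rintro rfl; omega
    have hx2 : x ≠ l2 := by rintro rfl; omega
    by_cases hxv : x = v
    · subst hxv
      have hex : ∃ w ∈ G.neighborFinset x, w ∉ ({l1, l2} : Finset V) := by
        by_contra hc
        push_neg at hc
        have hsub2 : G.neighborFinset x ⊆ {l1, l2} := fun w hw => hc w hw
        have hle := Finset.card_le_card hsub2
        rw [Finset.card_pair (Ne.symm hl21)] at hle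
        have hdd : (G.neighborFinset x).card = G.degree x := rfl
        omega
      obtain ⟨w, hwmem, hwnot⟩ := hex
      rw [G.mem_neighborFinset] at hwmem
      simp only [Finset.mem_insert, Finset.mem_singleton, not_or] at hwnot
      refine ⟨w, hwmem.symm, ?_⟩
      rw [hfother w hwnot.1 hwnot.2 (fun h => G.irrefl (h ▸ hwmem))]
      omega
    · obtain ⟨u, hu⟩ := myExistsAdj G hconn hnt x
      have hul1 : u ≠ l1 := by rintro rfl; exact hxv (hu1 x hu)
      have hul2 : u ≠ l2 := by rintro rfl; exact hxv (hu2 x hu)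
      refine ⟨u, hu, ?_⟩
      by_cases huv : u = v
      · subst huv; omega
      · rw [hfother u hul1 hul2 huv]; omega
  · have hsub : ({l1, l2, v} : Finset V) ⊆ Finset.univ := Finset.subset_univ _
    have hsplit : ∑ x, f x = ∑ x ∈ Finset.univ \ {l1, l2, v}, f x
        + ∑ x ∈ ({l1, l2, v} : Finset V), f x := (Finset.sum_sdiff hsub).symm
    have hs1 : ∑ x ∈ ({l1, l2, v} : Finset V), f x = 2 := by
      rw [Finset.sum_insert hnm1, Finset.sum_insert hnm2, Finset.sum_singleton,
        hfl1, hfl2, hfv]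
      norm_num
    have hs2 : ∑ x ∈ Finset.univ \ {l1, l2, v}, f x = Fintype.card V - 3 := by
      rw [Finset.sum_congr rfl (fun x hx => ?_)]
      · rw [Finset.sum_const, smul_eq_mul, mul_one,
          Finset.card_sdiff_of_subset hsub, Finset.card_univ, hcards]
      · simp only [Finset.mem_sdiff, Finset.mem_insert, Finset.mem_singleton,
          not_or] at hx
        exact hfother x hx.2.1 hx.2.2.1 hx.2.2.2
    rw [hsplit, hs1, hs2]

end Aux

theorem stmt10 {V : Type*} [Fintype V] (G : SimpleGraph V) [DecidableRel G.Adj]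
    (hconn : G.Connected) (hnt : Nontrivial V) :
    tR2 G = Fintype.card V ↔
      (Nonempty (G ≃g SimpleGraph.pathGraph 2) ∨
       Nonempty (G ≃g SimpleGraph.pathGraph 3) ∨
       ∀ v : V, G.degree v = 1 ∨ (∃! u : V, G.Adj v u ∧ G.degree u = 1)) := by
  classical
  constructor
  · intro heq
    by_contra hcon
    rw [not_or, not_or] at hcon
    obtain ⟨hP2, hP3, hv⟩ := hcon
    push_neg at hv
    obtain ⟨v, hvd, hvnu⟩ := hv
    have hdeg : 2 ≤ G.degree v := by
      obtain ⟨u0, hu0⟩ := myExistsAdj G hconn hnt v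
      have hpos : 0 < G.degree v := (G.degree_pos_iff_exists_adj v).mpr ⟨u0, hu0.symm⟩
      omega
    by_cases hleaf : ∃ u, G.Adj v u ∧ G.degree u = 1
    · obtain ⟨l1, hl1⟩ := hleaf
      have h2l : ∃ l2, (G.Adj v l2 ∧ G.degree l2 = 1) ∧ l2 ≠ l1 := by
        by_contra hc
        push_neg at hc
        exact hvnu ⟨l1, hl1, fun y hy => hc y hy⟩
      obtain ⟨l2, hl2, hl21⟩ := h2l
      by_cases hdeg2 : G.degree v = 2
      · exact myDegTwoP3 G hconn hP3 v l1 l2 hl1 hl2 hl21 hdeg2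
      · have hdeg3 : 3 ≤ G.degree v := by omega
        obtain ⟨⟨f, hf, hsum⟩, hcard3⟩ :=
          myCaseA G hconn hnt v l1 l2 hl1 hl2 hl21 hdeg3
        have hle : tR2 G ≤ Fintype.card V - 3 + 2 := by
          rw [← hsum]
          exact Nat.sInf_le ⟨f, hf, rfl⟩
        omega
    · obtain ⟨f, hf, hsum⟩ := myCaseB G hconn hnt v hdeg hleaf
      have hle : tR2 G ≤ Fintype.card V - 1 := by
        rw [← hsum]
        exact Nat.sInf_le ⟨f, hf, rfl⟩
      have hn2 : 2 ≤ Fintype.card V := Fintype.one_lt_card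
      omega
  · intro h
    have hmem := myMemN G hconn hnt
    have hub : tR2 G ≤ Fintype.card V := Nat.sInf_le hmem
    have hmm : tR2 G ∈ {w | ∃ f : V → ℕ, IsTR2DF G f ∧ ∑ v, f v = w} :=
      Nat.sInf_mem ⟨_, hmem⟩
    obtain ⟨f, hf, hsum⟩ := hmm
    have hlb : Fintype.card V ≤ ∑ x, f x := by
      rcases h with h | h | h3
      · obtain ⟨e⟩ := h
        exact myLowerCond3 G (fun w => Or.inl (myP2cond G e w)) hf
      · obtain ⟨e⟩ := h
        exact myP3lower G e hf
      · exact myLowerCond3 G h3 hf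
    omega
end

section
/- Let G be a nontrivial connected graph of order n with girth g ≥ 6 and minimum degree δ ≥ 2. Then γ_{tR2}(G) ≤ n + 2 − (Δ + δ), where Δ is the maximum degree. -/
namespace TR2Aux

open SimpleGraph Finset

variable {V : Type*} {G : SimpleGraph V}

lemma cycle_len (hg : 6 ≤ G.girth) {a : V} (w : G.Walk a a) (hw : w.IsCycle) :
    6 ≤ w.length := by
  have hne : ¬ G.IsAcyclic := fun h => h _ hw
  have h1 : G.egirth ≠ ⊤ := SimpleGraph.egirth_eq_top.not.mpr hne
  have h2 : (6 : ℕ∞) ≤ G.egirth := by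
    have := ENat.coe_toNat h1
    rw [← this]
    exact_mod_cast hg
  have := SimpleGraph.le_egirth.mp h2 a w hw
  exact_mod_cast this

lemma no3 (hg : 6 ≤ G.girth) {a b c : V} (h1 : G.Adj a b) (h2 : G.Adj b c) (h3 : G.Adj c a) :
    False := by
  have hc : (Walk.cons h1 (Walk.cons h2 (Walk.cons h3 Walk.nil))).IsCycle := by
    simp_all [Walk.isCycle_def, Walk.isTrail_def, List.pairwise_cons, Sym2.eq_iff,
      h1.ne, h2.ne, h3.ne, h1.ne', h2.ne', h3.ne']
  have := cycle_len hg _ hc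
  simp at this

lemma no4 (hg : 6 ≤ G.girth) {a b c d : V} (h1 : G.Adj a b) (h2 : G.Adj b c) (h3 : G.Adj c d)
    (h4 : G.Adj d a) (hac : a ≠ c) (hbd : b ≠ d) : False := by
  have hc : (Walk.cons h1 (Walk.cons h2 (Walk.cons h3 (Walk.cons h4 Walk.nil)))).IsCycle := by
    simp_all [Walk.isCycle_def, Walk.isTrail_def, List.pairwise_cons, Sym2.eq_iff,
      h1.ne, h2.ne, h3.ne, h4.ne, h1.ne', h2.ne', h3.ne', h4.ne', hac.symm, hbd.symm]
  have := cycle_len hg _ hc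
  simp at this

lemma no5 (hg : 6 ≤ G.girth) {a b c d e : V} (h1 : G.Adj a b) (h2 : G.Adj b c) (h3 : G.Adj c d)
    (h4 : G.Adj d e) (h5 : G.Adj e a) (hac : a ≠ c) (had : a ≠ d) (hbd : b ≠ d) (hbe : b ≠ e)
    (hce : c ≠ e) : False := by
  have hc : (Walk.cons h1 (Walk.cons h2 (Walk.cons h3 (Walk.cons h4
      (Walk.cons h5 Walk.nil))))).IsCycle := by
    simp_all [Walk.isCycle_def, Walk.isTrail_def, List.pairwise_cons, Sym2.eq_iff,
      h1.ne, h2.ne, h3.ne, h4.ne, h5.ne, h1.ne', h2.ne', h3.ne', h4.ne', h5.ne',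
      hac.symm, had.symm, hbd.symm, hbe.symm, hce.symm]
  have := cycle_len hg _ hc
  simp at this

end TR2Aux

open SimpleGraph Finset TR2Aux

theorem stmt11 {V : Type*} [Fintype V] (G : SimpleGraph V) [DecidableRel G.Adj]
    (hconn : G.Connected) (hnt : Nontrivial V)
    (hg : 6 ≤ G.girth) (hδ : 2 ≤ G.minDegree) :
    tR2 G + (G.maxDegree + G.minDegree) ≤ Fintype.card V + 2 := by
  classical
  have : Nonempty V := hnt.to_nonempty
  obtain ⟨v, hv⟩ := G.exists_maximal_degree_vertex
  have hdv2 : 2 ≤ G.degree v := le_trans hδ (G.minDegree_le_degree v)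
  have hNv : 1 ≤ (G.neighborFinset v).card := by
    rw [G.card_neighborFinset_eq_degree]; omega
  obtain ⟨u, hu⟩ := Finset.card_pos.mp (by omega : 0 < (G.neighborFinset v).card)
  have hadj : G.Adj v u := by rwa [SimpleGraph.mem_neighborFinset] at hu
  have hdu2 : 2 ≤ G.degree u := le_trans hδ (G.minDegree_le_degree u)
  set Z : Finset V := (G.neighborFinset v \ {u}) ∪ (G.neighborFinset u \ {v}) with hZdef
  have hmemZ : ∀ w, w ∈ Z ↔ (G.Adj v w ∧ w ≠ u) ∨ (G.Adj u w ∧ w ≠ v) := by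
    intro w
    simp [hZdef, Finset.mem_union, Finset.mem_sdiff, SimpleGraph.mem_neighborFinset]
  have hvZ : v ∉ Z := by
    rw [hmemZ]; rintro (⟨h, -⟩ | ⟨-, h⟩) <;> simp at h
  have huZ : u ∉ Z := by
    rw [hmemZ]; rintro (⟨-, h⟩ | ⟨h, -⟩) <;> simp at h
  set f : V → ℕ := fun w => if w ∈ Z then 0 else 1 with hfdef
  have hf1 : ∀ w, w ∉ Z → f w = 1 := fun w h => by simp [hfdef, h]
  -- second neighbor existence
  have hsecond : ∀ w x : V, G.Adj w x → ∃ y, G.Adj w y ∧ y ≠ x := by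
    intro w x hwx
    have hdw : 2 ≤ (G.neighborFinset w).card := by
      rw [G.card_neighborFinset_eq_degree]; exact le_trans hδ (G.minDegree_le_degree w)
    have : ((G.neighborFinset w) \ {x}).Nonempty := by
      rw [← Finset.card_pos, Finset.card_sdiff_of_subset (by simpa [SimpleGraph.mem_neighborFinset]),
        Finset.card_singleton]
      omega
    obtain ⟨y, hy⟩ := this
    rw [Finset.mem_sdiff, SimpleGraph.mem_neighborFinset, Finset.mem_singleton] at hy
    exact ⟨y, hy.1, hy.2⟩
  have hTR : IsTR2DF G f := by
    refine ⟨fun w => by by_cases h : w ∈ Z <;> simp [hfdef, h], ?_, ?_⟩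
    · -- zeros have two 1-neighbors
      intro w hw0
      have hwZ : w ∈ Z := by
        by_contra h; rw [hf1 w h] at hw0; omega
      rw [hmemZ] at hwZ
      right
      rcases hwZ with ⟨hvw, hwu⟩ | ⟨huw, hwv⟩
      · -- w ∈ N(v)\{u}
        obtain ⟨y, hwy, hyv⟩ := hsecond w v hvw.symm
        have hyZ : y ∉ Z := by
          rw [hmemZ]
          rintro (⟨hvy, -⟩ | ⟨huy, hyv'⟩)
          · exact no3 hg hvw hwy hvy.symm
          · exact no4 hg hvw hwy huy.symm hadj.symm (fun h => hyv h.symm) hwu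
        refine ⟨v, y, hyv.symm, hvw, hwy.symm, hf1 v hvZ, hf1 y hyZ⟩
      · -- w ∈ N(u)\{v}
        obtain ⟨y, hwy, hyu⟩ := hsecond w u huw.symm
        have hyZ : y ∉ Z := by
          rw [hmemZ]
          rintro (⟨hvy, hyu'⟩ | ⟨huy, -⟩)
          · exact no4 hg huw hwy hvy.symm hadj (fun h => hyu h.symm) hwv
          · exact no3 hg huw hwy huy.symm
        refine ⟨u, y, hyu.symm, huw, hwy.symm, hf1 u huZ, hf1 y hyZ⟩
    · -- totality
      intro w hw
      have hwZ : w ∉ Z := by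
        intro h; simp [hfdef, h] at hw
      by_cases hwv : w = v
      · exact ⟨u, by rw [hwv]; exact hadj.symm, by rw [hf1 u huZ]; omega⟩
      by_cases hwu : w = u
      · exact ⟨v, by rw [hwu]; exact hadj, by rw [hf1 v hvZ]; omega⟩
      -- w ∉ {v,u} ∪ Z : some neighbor outside Z
      by_contra hno
      push_neg at hno
      have hall : ∀ y, G.Adj w y → y ∈ Z := by
        intro y hy
        by_contra hyZ
        have := hno y hy.symm
        rw [hf1 y hyZ] at this; omega
      have hdw : 2 ≤ (G.neighborFinset w).card := by
        rw [G.card_neighborFinset_eq_degree]; exact le_trans hδ (G.minDegree_le_degree w)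
      obtain ⟨y1, hy1, y2, hy2, hy12⟩ := Finset.one_lt_card.mp hdw
      rw [SimpleGraph.mem_neighborFinset] at hy1 hy2
      have hz1 := (hmemZ y1).mp (hall y1 hy1)
      have hz2 := (hmemZ y2).mp (hall y2 hy2)
      rcases hz1 with ⟨hvy1, hy1u⟩ | ⟨huy1, hy1v⟩ <;>
        rcases hz2 with ⟨hvy2, hy2u⟩ | ⟨huy2, hy2v⟩
      · exact no4 hg hvy1 hy1.symm hy2 hvy2.symm (fun h => hwv h.symm) hy12
      · exact no5 hg hvy1 hy1.symm hy2 huy2.symm hadj.symm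
          (fun h => hwv h.symm) (fun h => hy2v h.symm) hy12 hy1u hwu
      · exact no5 hg hvy2 hy2.symm hy1 huy1.symm hadj.symm
          (fun h => hwv h.symm) (fun h => hy1v h.symm) hy12.symm hy2u hwu
      · exact no4 hg huy1 hy1.symm hy2 huy2.symm (fun h => hwu h.symm) hy12
  -- weight computation
  have hcardZ : Z.card + 2 = G.degree v + G.degree u := by
    have hdisj : Disjoint (G.neighborFinset v \ {u}) (G.neighborFinset u \ {v}) := by
      rw [Finset.disjoint_left]
      intro w hw1 hw2
      rw [Finset.mem_sdiff, SimpleGraph.mem_neighborFinset] at hw1 hw2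
      exact no3 hg hadj hw2.1 hw1.1.symm
    have h1 : (G.neighborFinset v \ {u}).card = G.degree v - 1 := by
      rw [Finset.card_sdiff_of_subset (by simpa [SimpleGraph.mem_neighborFinset] using hadj)]
      simp [G.card_neighborFinset_eq_degree]
    have h2 : (G.neighborFinset u \ {v}).card = G.degree u - 1 := by
      rw [Finset.card_sdiff_of_subset (by simpa [SimpleGraph.mem_neighborFinset] using hadj.symm)]
      simp [G.card_neighborFinset_eq_degree]
    rw [hZdef, Finset.card_union_of_disjoint hdisj, h1, h2]
    omega
  have hsum : ∑ w, f w + Z.card = Fintype.card V := by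
    have e0 : Finset.univ.filter (· ∈ Z) = Z := by ext w; simp
    have e1 : ∑ w ∈ Finset.univ.filter (· ∈ Z), f w = 0 := by
      apply Finset.sum_eq_zero
      intro w hw
      simp only [Finset.mem_filter] at hw
      simp [hfdef, hw.2]
    have e2 : ∑ w ∈ Finset.univ.filter (fun w => ¬ w ∈ Z), f w
        = (Finset.univ.filter (fun w => ¬ w ∈ Z)).card := by
      rw [Finset.card_eq_sum_ones]
      apply Finset.sum_congr rfl
      intro w hw
      simp only [Finset.mem_filter] at hw
      simp [hfdef, hw.2]
    have e3 : (Finset.univ.filter (· ∈ Z)).card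
        + (Finset.univ.filter (fun w => ¬ w ∈ Z)).card = Fintype.card V :=
      Finset.card_filter_add_card_filter_not _
    rw [← Finset.sum_filter_add_sum_filter_not Finset.univ (· ∈ Z) f, e1, e2, zero_add]
    rw [e0] at e3
    omega
  have hle : tR2 G ≤ ∑ w, f w := Nat.sInf_le ⟨f, hTR, rfl⟩
  have hΔ : G.maxDegree = G.degree v := hv
  have hδu : G.minDegree ≤ G.degree u := G.minDegree_le_degree u
  omega
end

section
/- For every nontrivial connected graph G of order n with maximum degree Δ, γ_{tR2}(G) ≥ ⌈2n/(Δ+1)⌉. -/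
lemma exists_adj_of_connected {V : Type*} (G : SimpleGraph V)
    (hconn : G.Connected) (hnt : Nontrivial V) (v : V) : ∃ u, G.Adj v u := by
  obtain ⟨w, hw⟩ := exists_ne v
  obtain ⟨p⟩ := hconn.preconnected v w
  cases p with
  | nil => exact absurd rfl hw.symm
  | cons h _ => exact ⟨_, h⟩

lemma key_ineq {V : Type*} [Fintype V] (G : SimpleGraph V) [DecidableRel G.Adj]
    (f : V → ℕ) (hf : IsTR2DF G f) :
    2 * Fintype.card V ≤ (G.maxDegree + 1) * ∑ v, f v := by
  classical
  obtain ⟨hle, h0, hpos⟩ := hf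
  have h1 : ∀ v, 2 ≤ f v + ∑ u ∈ G.neighborFinset v, f u := by
    intro v
    rcases Nat.eq_zero_or_pos (f v) with h | h
    · rcases h0 v h with ⟨u, hu, hu2⟩ | ⟨x, y, hxy, hx, hy, hx1, hy1⟩
      · have : f u ≤ ∑ u ∈ G.neighborFinset v, f u :=
          Finset.single_le_sum (fun _ _ => Nat.zero_le _)
            (by rw [SimpleGraph.mem_neighborFinset]; exact hu.symm)
        omega
      · have hsub : ({x, y} : Finset V) ⊆ G.neighborFinset v := by
          intro z hz
          rw [SimpleGraph.mem_neighborFinset]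
          rcases Finset.mem_insert.mp hz with rfl | hz
          · exact hx.symm
          · rw [Finset.mem_singleton] at hz; subst hz; exact hy.symm
        have : f x + f y ≤ ∑ u ∈ G.neighborFinset v, f u := by
          have := Finset.sum_le_sum_of_subset hsub (f := f)
          rwa [Finset.sum_insert (by simp [hxy]), Finset.sum_singleton] at this
        omega
    · obtain ⟨u, hu, hu1⟩ := hpos v h
      have : f u ≤ ∑ u ∈ G.neighborFinset v, f u :=
        Finset.single_le_sum (fun _ _ => Nat.zero_le _)
          (by rw [SimpleGraph.mem_neighborFinset]; exact hu.symm)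
      omega
  have h2 : ∑ v, ∑ u ∈ G.neighborFinset v, f u = ∑ u, G.degree u * f u := by
    have hv : ∀ v, ∑ u ∈ G.neighborFinset v, f u
        = ∑ u, if G.Adj v u then f u else 0 := by
      intro v
      rw [SimpleGraph.neighborFinset_eq_filter, Finset.sum_filter]
    simp_rw [hv]
    rw [Finset.sum_comm]
    refine Finset.sum_congr rfl fun u _ => ?_
    rw [← Finset.sum_filter, Finset.sum_const, smul_eq_mul,
      SimpleGraph.degree, SimpleGraph.neighborFinset_eq_filter]
    congr 2
    ext x
    simp [SimpleGraph.adj_comm]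
  calc 2 * Fintype.card V = ∑ _v : V, 2 := by
        rw [Finset.sum_const, Finset.card_univ, smul_eq_mul, mul_comm]
    _ ≤ ∑ v, (f v + ∑ u ∈ G.neighborFinset v, f u) := Finset.sum_le_sum fun v _ => h1 v
    _ = (∑ v, f v) + ∑ u, G.degree u * f u := by rw [Finset.sum_add_distrib, h2]
    _ ≤ (∑ v, f v) + ∑ u, G.maxDegree * f u := by
        gcongr with u
        exact G.degree_le_maxDegree u
    _ = (G.maxDegree + 1) * ∑ v, f v := by
        rw [← Finset.mul_sum]; ring

theorem stmt13 {V : Type*} [Fintype V] (G : SimpleGraph V) [DecidableRel G.Adj]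
    (hconn : G.Connected) (hnt : Nontrivial V) :
    (2 * Fintype.card V + G.maxDegree) / (G.maxDegree + 1) ≤ tR2 G := by
  have hne : {w | ∃ f : V → ℕ, IsTR2DF G f ∧ ∑ v, f v = w}.Nonempty := by
    refine ⟨∑ _v : V, 2, fun _ => 2, ⟨fun _ => le_refl 2, fun v h => by simp at h, ?_⟩, rfl⟩
    intro v _
    obtain ⟨u, hu⟩ := exists_adj_of_connected G hconn hnt v
    exact ⟨u, hu.symm, by simp⟩
  rw [tR2]
  refine le_csInf hne ?_
  rintro w ⟨f, hf, rfl⟩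
  have := key_ineq G f hf
  rw [Nat.div_le_iff_le_mul_add_pred (by omega)]
  omega
end

section
/- Let G be a nontrivial connected graph of order n with maximum degree Δ. If γ_{tR2}(G) = 2n/(Δ+1), then every minimum-weight total Roman {2}-dominating function f = (V_0, V_1, V_2) on G has V_2 = ∅. -/
theorem stmt14 {V : Type*} [Fintype V] (G : SimpleGraph V) [DecidableRel G.Adj]
    (hconn : G.Connected) (hnt : Nontrivial V)
    (heq : tR2 G * (G.maxDegree + 1) = 2 * Fintype.card V) :
    ∀ f : V → ℕ, IsTR2DF G f → ∑ v, f v = tR2 G → ∀ v, f v ≠ 2 := by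
  classical
  intro f hf hw v hv2
  obtain ⟨hle2, hdom, htot⟩ := hf
  -- pointwise bound
  have key : ∀ x : V, 2 + (if f x = 2 then 1 else 0) ≤
      f x + ∑ u ∈ G.neighborFinset x, f u := by
    intro x
    by_cases h0 : f x = 0
    · have hsum2 : 2 ≤ ∑ u ∈ G.neighborFinset x, f u := by
        rcases hdom x h0 with ⟨u, hu, hu2⟩ | ⟨a, b, hab, ha, hb, ha1, hb1⟩
        · have hmem : u ∈ G.neighborFinset x := by
            rw [SimpleGraph.mem_neighborFinset]; exact hu.symm
          calc 2 = f u := hu2.symm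
            _ ≤ _ := Finset.single_le_sum (fun i _ => Nat.zero_le _) hmem
        · have hsub : ({a, b} : Finset V) ⊆ G.neighborFinset x := by
            intro z hz
            rw [SimpleGraph.mem_neighborFinset]
            rcases Finset.mem_insert.1 hz with rfl | hz
            · exact ha.symm
            · rw [Finset.mem_singleton] at hz; subst hz; exact hb.symm
          have : ∑ u ∈ ({a, b} : Finset V), f u = 2 := by
            rw [Finset.sum_pair hab, ha1, hb1]
          calc 2 = ∑ u ∈ ({a, b} : Finset V), f u := this.symm
            _ ≤ _ := Finset.sum_le_sum_of_subset hsub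
      simpa [h0] using hsum2
    · obtain ⟨u, hu, hupos⟩ := htot x (Nat.pos_of_ne_zero h0)
      have hmem : u ∈ G.neighborFinset x := by
        rw [SimpleGraph.mem_neighborFinset]; exact hu.symm
      have hsum1 : 1 ≤ ∑ u ∈ G.neighborFinset x, f u :=
        le_trans hupos (Finset.single_le_sum (fun i _ => Nat.zero_le _) hmem)
      have := hle2 x
      have hxpos : 1 ≤ f x := Nat.pos_of_ne_zero h0
      split <;> omega
  -- sum of the key bound
  have hsum : 2 * Fintype.card V + (Finset.univ.filter (fun x => f x = 2)).card ≤
      ∑ x : V, (f x + ∑ u ∈ G.neighborFinset x, f u) := by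
    calc 2 * Fintype.card V + (Finset.univ.filter (fun x => f x = 2)).card
        = ∑ x : V, (2 + (if f x = 2 then 1 else 0)) := by
          rw [Finset.sum_add_distrib, Finset.sum_const, Finset.card_univ,
            smul_eq_mul, mul_comm, ← Finset.card_filter]
      _ ≤ _ := Finset.sum_le_sum (fun x _ => key x)
  -- swap the double sum
  have hswap : ∑ x : V, ∑ u ∈ G.neighborFinset x, f u = ∑ u : V, f u * G.degree u := by
    have h1 : ∀ x : V, ∑ u ∈ G.neighborFinset x, f u
        = ∑ u : V, if G.Adj x u then f u else 0 := by
      intro x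
      rw [SimpleGraph.neighborFinset_eq_filter, Finset.sum_filter]
    simp only [h1]
    rw [Finset.sum_comm]
    refine Finset.sum_congr rfl (fun u _ => ?_)
    have h2 : ∑ x : V, (if G.Adj x u then f u else 0)
        = ∑ x : V, (if G.Adj u x then f u else 0) :=
      Finset.sum_congr rfl (fun x _ => if_congr (G.adj_comm x u) rfl rfl)
    rw [h2, ← Finset.sum_filter, Finset.sum_const, ← SimpleGraph.neighborFinset_eq_filter,
      SimpleGraph.card_neighborFinset_eq_degree, smul_eq_mul, mul_comm]
  -- upper bound
  have hub : ∑ x : V, (f x + ∑ u ∈ G.neighborFinset x, f u) ≤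
      tR2 G * (G.maxDegree + 1) := by
    rw [Finset.sum_add_distrib, hswap, hw]
    have : ∑ u : V, f u * G.degree u ≤ ∑ u : V, f u * G.maxDegree :=
      Finset.sum_le_sum (fun u _ =>
        Nat.mul_le_mul_left _ (G.degree_le_maxDegree u))
    calc tR2 G + ∑ u : V, f u * G.degree u
        ≤ tR2 G + ∑ u : V, f u * G.maxDegree := by omega
      _ = tR2 G + (∑ u : V, f u) * G.maxDegree := by rw [Finset.sum_mul]
      _ = tR2 G * (G.maxDegree + 1) := by rw [hw]; ring
  have hcard : (Finset.univ.filter (fun x => f x = 2)).card = 0 := by omega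
  have hvmem : v ∈ Finset.univ.filter (fun x => f x = 2) := by
    simp [hv2]
  rw [Finset.card_eq_zero] at hcard
  rw [hcard] at hvmem
  exact absurd hvmem (Finset.notMem_empty v)
end

section
/- Let G be a graph without isolated vertices and let v be a strong support vertex of G (adjacent to at least two leaves). Then there exists a minimum-weight total Roman {2}-dominating function f on G with f(v) = 2. -/
lemma leafnbr {V : Type*} [Fintype V] {G : SimpleGraph V} [DecidableRel G.Adj]
    {u v a : V} (hd : G.degree u = 1) (hv : G.Adj u v) (ha : G.Adj u a) : a = v := by
  have h1 : v ∈ G.neighborFinset u := by simpa using hv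
  have h2 : a ∈ G.neighborFinset u := by simpa using ha
  have hc : (G.neighborFinset u).card ≤ 1 := le_of_eq hd
  exact Finset.card_le_one.mp hc _ h2 _ h1

theorem stmt16 {V : Type*} [Fintype V] (G : SimpleGraph V) [DecidableRel G.Adj]
    (hiso : ∀ v : V, ∃ u, G.Adj u v)
    (v : V) (hstrong : ∃ u w : V, u ≠ w ∧ G.Adj v u ∧ G.Adj v w ∧
      G.degree u = 1 ∧ G.degree w = 1) :
    ∃ f : V → ℕ, IsTR2DF G f ∧ ∑ x, f x = tR2 G ∧ f v = 2 := by
  classical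
  obtain ⟨u, w, huw, hvu, hvw, hdu, hdw⟩ := hstrong
  have hne : {m | ∃ f : V → ℕ, IsTR2DF G f ∧ ∑ x, f x = m}.Nonempty := by
    refine ⟨∑ x : V, (2 : ℕ), fun _ => 2, ⟨fun _ => le_rfl, fun x h => by simp at h,
      fun x _ => ?_⟩, rfl⟩
    obtain ⟨a, ha⟩ := hiso x
    exact ⟨a, ha, by norm_num⟩
  obtain ⟨f, hf, hsum0⟩ := Nat.sInf_mem hne
  have hsum : ∑ x, f x = tR2 G := hsum0
  clear hsum0 hne
  have hvu' : G.Adj u v := hvu.symm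
  have hvw' : G.Adj w v := hvw.symm
  have vne_u : v ≠ u := G.ne_of_adj hvu
  have vne_w : v ≠ w := G.ne_of_adj hvw
  -- if a leaf has value 0 then f v = 2
  have hleaf : ∀ x : V, G.degree x = 1 → G.Adj x v → f x = 0 → f v = 2 := by
    intro x hdx hxv hx0
    rcases hf.2.1 x hx0 with ⟨a, hax, ha2⟩ | ⟨a, b, hab, hax, hbx, _, _⟩
    · have : a = v := leafnbr hdx hxv hax.symm
      rwa [this] at ha2
    · have ha : a = v := leafnbr hdx hxv hax.symm
      have hb : b = v := leafnbr hdx hxv hbx.symm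
      exact absurd (ha.trans hb.symm) hab
  by_cases h0 : f u = 0 ∨ f w = 0
  · rcases h0 with h0 | h0
    · exact ⟨f, hf, hsum, hleaf u hdu hvu' h0⟩
    · exact ⟨f, hf, hsum, hleaf w hdw hvw' h0⟩
  push_neg at h0
  have hfu : 0 < f u := Nat.pos_of_ne_zero h0.1
  have hfw : 0 < f w := Nat.pos_of_ne_zero h0.2
  -- total condition on u forces f v > 0
  have hfv : 0 < f v := by
    obtain ⟨a, hau, ha⟩ := hf.2.2 u hfu
    have : a = v := leafnbr hdu hvu' hau.symm
    rwa [this] at ha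
  have keyu : ∀ {a x : V}, G.Adj a x → a = u → x = v := by
    intro a x hax h; subst h; exact leafnbr hdu hvu' hax
  have keyw : ∀ {a x : V}, G.Adj a x → a = w → x = v := by
    intro a x hax h; subst h; exact leafnbr hdw hvw' hax
  obtain ⟨g, hg_def⟩ : ∃ g : V → ℕ, g = fun x =>
      if x = v then 2 else if x = u then 1 else if x = w then 0 else f x := ⟨_, rfl⟩
  have gv : g v = 2 := by simp [hg_def]
  have gu : g u = 1 := by simp [hg_def, vne_u.symm]
  have gw : g w = 0 := by simp [hg_def, vne_w.symm, huw.symm]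
  have gother : ∀ x, x ≠ v → x ≠ u → x ≠ w → g x = f x := by
    intro x h1 h2 h3; simp [hg_def, h1, h2, h3]
  have hgT : IsTR2DF G g := by
    refine ⟨?_, ?_, ?_⟩
    · intro x
      by_cases h1 : x = v; · simp [h1, gv]
      by_cases h2 : x = u; · simp [h2, gu]
      by_cases h3 : x = w; · simp [h3, gw]
      rw [gother x h1 h2 h3]; exact hf.1 x
    · intro x hx0
      by_cases h1 : x = v; · rw [h1, gv] at hx0; omega
      by_cases h2 : x = u; · rw [h2, gu] at hx0; omega
      by_cases h3 : x = w
      · subst h3; exact Or.inl ⟨v, hvw, gv⟩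
      rw [gother x h1 h2 h3] at hx0
      rcases hf.2.1 x hx0 with ⟨a, hax, ha2⟩ | ⟨a, b, hab, hax, hbx, ha1, hb1⟩
      · by_cases hav : a = v
        · exact Or.inl ⟨v, by rwa [hav] at hax, gv⟩
        have hau : a ≠ u := fun h => h1 (keyu hax h)
        have haw : a ≠ w := fun h => h1 (keyw hax h)
        exact Or.inl ⟨a, hax, (gother a hav hau haw).trans ha2⟩
      · by_cases hav : a = v
        · exact Or.inl ⟨v, by rwa [hav] at hax, gv⟩
        by_cases hbv : b = v
        · exact Or.inl ⟨v, by rwa [hbv] at hbx, gv⟩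
        have hau : a ≠ u := fun h => h1 (keyu hax h)
        have haw : a ≠ w := fun h => h1 (keyw hax h)
        have hbu : b ≠ u := fun h => h1 (keyu hbx h)
        have hbw : b ≠ w := fun h => h1 (keyw hbx h)
        exact Or.inr ⟨a, b, hab, hax, hbx,
          (gother a hav hau haw).trans ha1, (gother b hbv hbu hbw).trans hb1⟩
    · intro x hx
      by_cases h1 : x = v
      · subst h1; exact ⟨u, hvu', by rw [gu]; omega⟩
      by_cases h2 : x = u
      · subst h2; exact ⟨v, hvu, by rw [gv]; omega⟩
      by_cases h3 : x = w; · rw [h3, gw] at hx; omega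
      rw [gother x h1 h2 h3] at hx
      obtain ⟨a, hax, ha⟩ := hf.2.2 x hx
      by_cases hav : a = v
      · exact ⟨v, by rwa [hav] at hax, by rw [gv]; omega⟩
      have hau : a ≠ u := fun h => h1 (keyu hax h)
      have haw : a ≠ w := fun h => h1 (keyw hax h)
      exact ⟨a, hax, by rw [gother a hav hau haw]; exact ha⟩
  -- sum comparison
  have hsum_le : ∑ x, g x ≤ ∑ x, f x := by
    have hsub : ({v, u, w} : Finset V) ⊆ Finset.univ := Finset.subset_univ _
    have hsplit : ∀ h : V → ℕ, ∑ x, h x = ∑ x ∈ ({v, u, w} : Finset V), h x +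
        ∑ x ∈ ({v, u, w} : Finset V)ᶜ, h x := by
      intro h; rw [Finset.sum_add_sum_compl]
    have hset : ∀ h : V → ℕ, ∑ x ∈ ({v, u, w} : Finset V), h x = h v + h u + h w := by
      intro h
      rw [show ({v, u, w} : Finset V) = insert v (insert u {w}) from rfl,
        Finset.sum_insert (by simp [vne_u, vne_w]),
        Finset.sum_insert (by simp [huw]), Finset.sum_singleton]
      ring
    have hcompl : ∑ x ∈ ({v, u, w} : Finset V)ᶜ, g x =
        ∑ x ∈ ({v, u, w} : Finset V)ᶜ, f x := by
      apply Finset.sum_congr rfl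
      intro x hx
      simp only [Finset.mem_compl, Finset.mem_insert, Finset.mem_singleton] at hx
      push_neg at hx
      exact gother x hx.1 hx.2.1 hx.2.2
    rw [hsplit g, hsplit f, hset g, hset f, hcompl, gv, gu, gw]
    have h2 : f u ≤ 2 := hf.1 u
    have h3 : f w ≤ 2 := hf.1 w
    omega
  have hle : tR2 G ≤ ∑ x, g x := Nat.sInf_le ⟨g, hgT, rfl⟩
  exact ⟨g, hgT, le_antisymm (by rw [← hsum]; exact hsum_le) hle, gv⟩
end

section
/- If T is the tree obtained from a path v_1 v_2 … v_k (k ≥ 4) by adding a new pendant vertex w adjacent to v_{k−1}, then γ_{tR2}(T) < 2(k+3)/3. -/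
private lemma sum3aux (m : ℕ) :
    3 * ∑ i ∈ Finset.range m, (if i % 3 = 2 then 0 else 1) = 2 * m + m % 3 := by
  induction m with
  | zero => simp
  | succ n ih =>
    rw [Finset.sum_range_succ, Nat.mul_add, ih]
    by_cases h : n % 3 = 2 <;> simp [h] <;> omega

theorem stmt18 (k : ℕ) (hk : 4 ≤ k)
    (T : SimpleGraph (Fin (k + 1)))
    (hT : T = SimpleGraph.fromRel (fun i j : Fin (k + 1) =>
      (i.val + 1 = j.val ∧ j.val < k) ∨ (i.val = k - 2 ∧ j.val = k))) :
    3 * tR2 T < 2 * (k + 3) := by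
  obtain ⟨m, rfl⟩ : ∃ m, k = m + 2 := ⟨k - 2, by omega⟩
  have hm : 2 ≤ m := by omega
  subst hT
  set g : ℕ → ℕ := fun i =>
    if i = m then 2 else if i = m + 1 ∧ m % 3 = 0 then 1
    else if i < m ∧ i % 3 ≠ 2 then 1 else 0 with hg
  have hadj : ∀ a b : Fin (m + 2 + 1),
      (SimpleGraph.fromRel fun i j : Fin (m + 2 + 1) =>
        (i.val + 1 = j.val ∧ j.val < m + 2) ∨ (i.val = m + 2 - 2 ∧ j.val = m + 2)).Adj a b ↔
      (a.val ≠ b.val ∧ (((a.val + 1 = b.val ∧ b.val < m + 2) ∨ (a.val = m ∧ b.val = m + 2)) ∨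
        ((b.val + 1 = a.val ∧ a.val < m + 2) ∨ (b.val = m ∧ a.val = m + 2)))) := by
    intro a b
    rw [SimpleGraph.fromRel_adj]
    simp only [ne_eq, Fin.ext_iff, Nat.add_sub_cancel]
  have hf : IsTR2DF (SimpleGraph.fromRel fun i j : Fin (m + 2 + 1) =>
      (i.val + 1 = j.val ∧ j.val < m + 2) ∨ (i.val = m + 2 - 2 ∧ j.val = m + 2))
      (fun v : Fin (m + 2 + 1) => g v.val) := by
    refine ⟨?_, ?_, ?_⟩
    · intro v; simp only [hg]; split_ifs <;> (try simp only [true_and, and_true] at *) <;> omega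
    · intro v hv
      have hvlt : v.val < m + 3 := v.isLt
      simp only [hg] at hv
      split_ifs at hv with h1 h2 h3
      rcases (show v.val = m + 1 ∨ v.val = m + 2 ∨ (v.val < m ∧ v.val % 3 = 2) by omega)
        with h | h | ⟨h, h'⟩
      · left
        refine ⟨⟨m, by omega⟩, ?_, ?_⟩
        · rw [hadj]; simp only [Fin.val_mk, true_and, and_true]; omega
        · simp only [hg, Fin.val_mk]; split_ifs <;> (try simp only [true_and, and_true] at *) <;> omega
      · left
        refine ⟨⟨m, by omega⟩, ?_, ?_⟩
        · rw [hadj]; simp only [Fin.val_mk, true_and, and_true]; omega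
        · simp only [hg, Fin.val_mk]; split_ifs <;> (try simp only [true_and, and_true] at *) <;> omega
      · by_cases he : v.val + 1 = m
        · left
          refine ⟨⟨m, by omega⟩, ?_, ?_⟩
          · rw [hadj]; simp only [Fin.val_mk, true_and, and_true]; omega
          · simp only [hg, Fin.val_mk]; split_ifs <;> (try simp only [true_and, and_true] at *) <;> omega
        · right
          refine ⟨⟨v.val - 1, by omega⟩, ⟨v.val + 1, by omega⟩, ?_, ?_, ?_, ?_, ?_⟩
          · simp only [ne_eq, Fin.mk.injEq]; omega
          · rw [hadj]; simp only [Fin.val_mk, true_and, and_true]; omega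
          · rw [hadj]; simp only [Fin.val_mk, true_and, and_true]; omega
          · simp only [hg, Fin.val_mk]; split_ifs <;> (try simp only [true_and, and_true] at *) <;> omega
          · simp only [hg, Fin.val_mk]; split_ifs <;> (try simp only [true_and, and_true] at *) <;> omega
    · intro v hv
      have hvlt : v.val < m + 3 := v.isLt
      simp only [hg] at hv
      split_ifs at hv with h1 h2 h3
      · by_cases hm3 : m % 3 = 0
        · refine ⟨⟨m + 1, by omega⟩, ?_, ?_⟩
          · rw [hadj]; simp only [Fin.val_mk, true_and, and_true]; omega
          · simp only [hg, Fin.val_mk]; split_ifs <;> (try simp only [true_and, and_true] at *) <;> omega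
        · refine ⟨⟨m - 1, by omega⟩, ?_, ?_⟩
          · rw [hadj]; simp only [Fin.val_mk, true_and, and_true]; omega
          · simp only [hg, Fin.val_mk]; split_ifs <;> (try simp only [true_and, and_true] at *) <;> omega
      · refine ⟨⟨m, by omega⟩, ?_, ?_⟩
        · rw [hadj]; simp only [Fin.val_mk, true_and, and_true]; omega
        · simp only [hg, Fin.val_mk]; split_ifs <;> (try simp only [true_and, and_true] at *) <;> omega
      · rcases (show v.val % 3 = 0 ∨ v.val % 3 = 1 by omega) with h | h
        · refine ⟨⟨v.val + 1, by omega⟩, ?_, ?_⟩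
          · rw [hadj]; simp only [Fin.val_mk, true_and, and_true]; omega
          · simp only [hg, Fin.val_mk]; split_ifs <;> (try simp only [true_and, and_true] at *) <;> omega
        · refine ⟨⟨v.val - 1, by omega⟩, ?_, ?_⟩
          · rw [hadj]; simp only [Fin.val_mk, true_and, and_true]; omega
          · simp only [hg, Fin.val_mk]; split_ifs <;> (try simp only [true_and, and_true] at *) <;> omega
      · exact absurd hv (by omega)
  have hsum : ∑ v : Fin (m + 2 + 1), g v.val =
      (∑ i ∈ Finset.range m, (if i % 3 = 2 then 0 else 1)) + 2 +
        (if m % 3 = 0 then 1 else 0) := by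
    rw [Fin.sum_univ_eq_sum_range g (m + 2 + 1)]
    rw [Finset.sum_range_succ, Finset.sum_range_succ, Finset.sum_range_succ]
    have e1 : g m = 2 := by simp [hg]
    have e2 : g (m + 1) = if m % 3 = 0 then 1 else 0 := by
      simp only [hg]; split_ifs <;> (try simp only [true_and, and_true] at *) <;> omega
    have e3 : g (m + 2) = 0 := by simp only [hg]; split_ifs <;> (try simp only [true_and, and_true] at *) <;> omega
    have e4 : ∑ i ∈ Finset.range m, g i =
        ∑ i ∈ Finset.range m, (if i % 3 = 2 then 0 else 1) := by
      apply Finset.sum_congr rfl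
      intro i hi
      simp only [Finset.mem_range] at hi
      simp only [hg]; split_ifs <;> (try simp only [true_and, and_true] at *) <;> omega
    rw [e1, e2, e3, e4]
    omega
  have hle : tR2 (SimpleGraph.fromRel fun i j : Fin (m + 2 + 1) =>
        (i.val + 1 = j.val ∧ j.val < m + 2) ∨ (i.val = m + 2 - 2 ∧ j.val = m + 2)) ≤
      ∑ v : Fin (m + 2 + 1), g v.val :=
    Nat.sInf_le ⟨_, hf, rfl⟩
  have h3S := sum3aux m
  rw [hsum] at hle
  by_cases h0 : m % 3 = 0 <;> simp only [h0, if_true, if_false] at hle <;> omega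
end
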